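/- arXiv:2205.04527 — 4 statements merged into one kernel-verified Lean document; each statement's English description precedes it below -/
import Mathlib

section
/- For all positive integers m and n, the number of partitions of n into parts not divisible by m equals p(n) + \sum_{k \geq 1} (-1)^k \left( p\left(n - \frac{mk(3k-1)}{2}\right) + p\left(n - \frac{mk(3k+1)}{2}\right) \right), where p denotes the ordinary partition function and p(t) is taken to be 0 whenever t < 0 (so the sum has only finitely many nonzero terms). -/
open Finset Multiset

/-- `p(t)` for an integer argument: the number of partitions of `t` when `t ≥ 0`,
and `0` when `t < 0`. -/
def partitionCount (t : ℤ) : ℤ :=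
  if 0 ≤ t then (Fintype.card (Nat.Partition t.toNat) : ℤ) else 0

def Pset (a : ℕ) : Finset (Multiset ℕ) :=
  Finset.univ.image (fun π : Nat.Partition a => π.parts)

lemma mem_Pset {a : ℕ} {μ : Multiset ℕ} :
    μ ∈ Pset a ↔ μ.sum = a ∧ ∀ x ∈ μ, 0 < x := by
  constructor
  · rintro h
    simp only [Pset, Finset.mem_image] at h
    obtain ⟨π, -, rfl⟩ := h
    exact ⟨π.parts_sum, fun x hx => π.parts_pos hx⟩
  · rintro ⟨h1, h2⟩
    simp only [Pset, Finset.mem_image]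
    exact ⟨⟨μ, fun hi => h2 _ hi, h1⟩, Finset.mem_univ _, rfl⟩

lemma card_Pset (a : ℕ) : (Pset a).card = Fintype.card (Nat.Partition a) := by
  rw [Pset, Finset.card_image_of_injective]
  · simp
  · intro π₁ π₂ h
    cases π₁; cases π₂; simpa using h

def Qset (m a : ℕ) : Finset (Multiset ℕ) :=
  (Pset a).filter (fun μ => ∀ x ∈ μ, ¬ m ∣ x)

lemma mem_Qset {m a : ℕ} {μ : Multiset ℕ} :
    μ ∈ Qset m a ↔ (μ.sum = a ∧ ∀ x ∈ μ, 0 < x) ∧ ∀ x ∈ μ, ¬ m ∣ x := by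
  simp [Qset, mem_Pset]

lemma map_div_mul (m : ℕ) (hm : 0 < m) (s : Multiset ℕ) (hs : ∀ x ∈ s, m ∣ x) :
    (s.map (· / m)).map (m * ·) = s := by
  rw [Multiset.map_map]
  have : Multiset.map ((m * ·) ∘ (· / m)) s = Multiset.map id s :=
    Multiset.map_congr rfl (fun x hx => Nat.mul_div_cancel' (hs x hx))
  rw [this, Multiset.map_id]

lemma conv1 (m n : ℕ) (hm : 0 < m) :
    (Pset n).card =
      ∑ j ∈ (Finset.range (n+1)).filter (fun j => m * j ≤ n),
        (Pset j).card * (Qset m (n - m * j)).card := by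
  classical
  have hprod : ∀ j, (Pset j).card * (Qset m (n - m * j)).card
      = ((Pset j) ×ˢ (Qset m (n - m * j))).card := fun j => (Finset.card_product _ _).symm
  simp_rw [hprod]
  rw [← Finset.card_sigma]
  apply Finset.card_nbij'
    (i := fun μ => ⟨((μ.filter (m ∣ ·)).map (· / m)).sum,
        ((μ.filter (m ∣ ·)).map (· / m), μ.filter (fun x => ¬ m ∣ x))⟩)
    (j := fun q => q.2.1.map (m * ·) + q.2.2)
  · -- forward maps into sigma
    intro μ hμ
    obtain ⟨hsum, hpos⟩ := mem_Pset.mp hμ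
    have hms : m * ((μ.filter (m ∣ ·)).map (· / m)).sum = (μ.filter (m ∣ ·)).sum := by
      conv_lhs => rw [← Multiset.sum_map_mul_left]
      have : Multiset.map (fun i => m * (i / m)) (μ.filter (m ∣ ·))
          = Multiset.map id (μ.filter (m ∣ ·)) :=
        Multiset.map_congr rfl (fun x hx => Nat.mul_div_cancel' (Multiset.mem_filter.mp hx).2)
      rw [this, Multiset.map_id]
    have hsplit := Multiset.sum_filter_add_sum_filter_not (s := μ) (m ∣ ·)
    simp only [Finset.mem_coe, Finset.mem_sigma, Finset.mem_filter, Finset.mem_range, Finset.mem_product]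
    have hmle : m * ((μ.filter (m ∣ ·)).map (· / m)).sum ≤ n := by
      rw [hms]; omega
    have hself : ((μ.filter (m ∣ ·)).map (· / m)).sum
        ≤ m * ((μ.filter (m ∣ ·)).map (· / m)).sum :=
      Nat.le_mul_of_pos_left _ hm
    refine ⟨⟨by omega, hmle⟩, ?_, ?_⟩
    · rw [mem_Pset]
      refine ⟨rfl, ?_⟩
      intro x hx
      obtain ⟨y, hy, rfl⟩ := Multiset.mem_map.mp hx
      have hyμ := Multiset.mem_of_mem_filter hy
      have hdvd : m ∣ y := (Multiset.mem_filter.mp hy).2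
      exact Nat.div_pos (Nat.le_of_dvd (hpos y hyμ) hdvd) hm
    · rw [mem_Qset]
      refine ⟨⟨?_, fun x hx => hpos x (Multiset.mem_of_mem_filter hx)⟩,
        fun x hx => (Multiset.mem_filter.mp hx).2⟩
      have h2 : (μ.filter (fun x => ¬ m ∣ x)).sum
          = n - (μ.filter (m ∣ ·)).sum := by omega
      rw [h2, hms]
  · -- backward maps into Pset n
    rintro ⟨j, α, β⟩ hq
    simp only [Finset.mem_coe, Finset.mem_sigma, Finset.mem_filter, Finset.mem_range, Finset.mem_product] at hq
    obtain ⟨⟨hjn, hmj⟩, hα, hβ⟩ := hq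
    obtain ⟨hαs, hαp⟩ := mem_Pset.mp hα
    obtain ⟨⟨hβs, hβp⟩, hβd⟩ := mem_Qset.mp hβ
    rw [Finset.mem_coe, mem_Pset]
    constructor
    · rw [Multiset.sum_add, Multiset.sum_map_mul_left, Multiset.map_id', hαs, hβs]
      omega
    · intro x hx
      rcases Multiset.mem_add.mp hx with hx | hx
      · obtain ⟨y, hy, rfl⟩ := Multiset.mem_map.mp hx
        exact Nat.mul_pos hm (hαp y hy)
      · exact hβp x hx
  · -- left inverse
    intro μ hμ
    obtain ⟨hsum, hpos⟩ := mem_Pset.mp hμ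
    have h1 : ((μ.filter (m ∣ ·)).map (· / m)).map (m * ·) = μ.filter (m ∣ ·) :=
      map_div_mul m hm _ (fun x hx => (Multiset.mem_filter.mp hx).2)
    show ((μ.filter (m ∣ ·)).map (· / m)).map (m * ·) + μ.filter (fun x => ¬ m ∣ x) = μ
    rw [h1]
    exact Multiset.filter_add_not _ μ
  · -- right inverse
    rintro ⟨j, α, β⟩ hq
    simp only [Finset.mem_coe, Finset.mem_sigma, Finset.mem_filter, Finset.mem_range, Finset.mem_product] at hq
    obtain ⟨⟨hjn, hmj⟩, hα, hβ⟩ := hq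
    obtain ⟨hαs, hαp⟩ := mem_Pset.mp hα
    obtain ⟨⟨hβs, hβp⟩, hβd⟩ := mem_Qset.mp hβ
    have hfilt : (α.map (m * ·) + β).filter (m ∣ ·) = α.map (m * ·) := by
      rw [Multiset.filter_add, Multiset.filter_eq_self.mpr, Multiset.filter_eq_nil.mpr, add_zero]
      · exact hβd
      · intro x hx
        obtain ⟨y, hy, rfl⟩ := Multiset.mem_map.mp hx
        exact Dvd.intro y rfl
    have hfilt2 : (α.map (m * ·) + β).filter (fun x => ¬ m ∣ x) = β := by
      rw [Multiset.filter_add, Multiset.filter_eq_nil.mpr, Multiset.filter_eq_self.mpr, zero_add]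
      · exact hβd
      · intro x hx
        obtain ⟨y, hy, rfl⟩ := Multiset.mem_map.mp hx
        intro hc; exact hc (Dvd.intro y rfl)
    have hback : ((α.map (m * ·)).map (· / m)) = α := by
      rw [Multiset.map_map]
      have : Multiset.map ((· / m) ∘ (m * ·)) α = Multiset.map id α :=
        Multiset.map_congr rfl (fun x hx => Nat.mul_div_cancel_left x hm)
      rw [this, Multiset.map_id]
    show (⟨_, (_, _)⟩ : (_ : ℕ) × (Multiset ℕ × Multiset ℕ)) = ⟨j, (α, β)⟩
    rw [hfilt, hfilt2, hback, hαs]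
lemma cast_sum' (μ : Multiset ℕ) : ((μ.sum : ℕ) : ℤ) = (Multiset.map (fun x : ℕ => (x:ℤ)) μ).sum :=
  Nat.cast_multiset_sum μ

lemma sum_map_pred (μ : Multiset ℕ) (h : ∀ x ∈ μ, 0 < x) :
    (((Multiset.map (fun x => x - 1) μ).sum : ℕ) : ℤ) = (μ.sum : ℤ) - Multiset.card μ := by
  rw [cast_sum', Multiset.map_map, cast_sum']
  have : Multiset.map ((fun x : ℕ => (x:ℤ)) ∘ (fun x => x - 1)) μ
      = Multiset.map (fun x : ℕ => (x:ℤ) - 1) μ := by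
    apply Multiset.map_congr rfl
    intro x hx
    have := h x hx
    simp only [Function.comp_apply]
    omega
  rw [this, Multiset.sum_map_sub]
  simp

lemma sum_filter_pos (s : Multiset ℕ) : (s.filter (fun x => 0 < x)).sum = s.sum := by
  conv_rhs => rw [← Multiset.filter_add_not (fun x => 0 < x) s]
  rw [Multiset.sum_add]
  have h0 : (Multiset.filter (fun x => ¬ 0 < x) s).sum = 0 :=
    Multiset.sum_eq_zero (fun x hx => by have := (Multiset.mem_filter.mp hx).2; omega)
  rw [h0, add_zero]

lemma sup_mem_of_ne_zero {μ : Multiset ℕ} (h : μ ≠ 0) : μ.sup ∈ μ := by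
  induction μ using Multiset.induction with
  | empty => simp at h
  | cons a s ih =>
    rw [Multiset.sup_cons]
    rcases eq_or_ne s 0 with rfl | hs
    · simp
    · rcases le_total a s.sup with h1 | h1
      · rw [sup_eq_right.mpr h1]; exact Multiset.mem_cons_of_mem (ih hs)
      · rw [sup_eq_left.mpr h1]; exact Multiset.mem_cons_self a s

def bzDown (k : ℤ) (μ : Multiset ℕ) : Multiset ℕ :=
  (((Multiset.card μ : ℤ) + 3 * k - 1).toNat ::ₘ μ.map (fun x => x - 1)).filter (fun x => 0 < x)

def bzUp (k : ℤ) (μ : Multiset ℕ) : Multiset ℕ :=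
  (μ.erase μ.sup).map (fun x => x + 1) +
    Multiset.replicate ((μ.sup : ℤ) - (Multiset.card (μ.erase μ.sup) : ℤ) - 3 * k - 2).toNat 1

lemma filter_map_pred (μ : Multiset ℕ) :
    Multiset.filter (fun x => 0 < x) (Multiset.map (fun x => x - 1) μ)
      = Multiset.map (fun x => x - 1) (Multiset.filter (fun x => 2 ≤ x) μ) := by
  rw [Multiset.filter_map]
  congr 1
  apply Multiset.filter_congr
  intro x _
  simp only [Function.comp_apply]
  constructor <;> omega

lemma down_spec (k : ℤ) (μ : Multiset ℕ) (hpos : ∀ x ∈ μ, 0 < x)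
    (hcond : (μ.sup : ℤ) ≤ (Multiset.card μ : ℤ) + 3 * k)
    (hk : μ = 0 → 1 ≤ k) :
    (∀ x ∈ bzDown k μ, 0 < x) ∧
    ((bzDown k μ).sum : ℤ) = (μ.sum : ℤ) + 3 * k - 1 ∧
    ¬ (((bzDown k μ).sup : ℤ) ≤ (Multiset.card (bzDown k μ) : ℤ) + 3 * (k - 1)) ∧
    bzUp (k - 1) (bzDown k μ) = μ := by
  classical
  set c := Multiset.card μ with hc
  have hv' : (0:ℤ) ≤ (c : ℤ) + 3 * k - 1 := by
    rcases eq_or_ne μ 0 with rfl | hne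
    · have := hk rfl
      simp only [Multiset.card_zero, hc] at *
      omega
    · have h1 : 1 ≤ μ.sup := hpos _ (sup_mem_of_ne_zero hne)
      have : (1:ℤ) ≤ (μ.sup : ℤ) := by exact_mod_cast h1
      omega
  set v : ℕ := ((c : ℤ) + 3 * k - 1).toNat with hvdef
  have hvz : (v : ℤ) = (c : ℤ) + 3 * k - 1 := Int.toNat_of_nonneg hv'
  set F2 := Multiset.filter (fun x => 2 ≤ x) μ with hF2def
  set z := Multiset.card (Multiset.filter (fun x => ¬ 2 ≤ x) μ) with hzdef
  have hcz : Multiset.card F2 + z = c := by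
    rw [hF2def, hzdef, ← Multiset.card_add, Multiset.filter_add_not]
  have hone : Multiset.filter (fun x => ¬ 2 ≤ x) μ = Multiset.replicate z 1 :=
    Multiset.eq_replicate.mpr ⟨rfl, fun b hb => by
      have h1 := hpos b (Multiset.mem_of_mem_filter hb)
      have h2 := (Multiset.mem_filter.mp hb).2
      omega⟩
  have hpos' : ∀ x ∈ bzDown k μ, 0 < x := fun x hx => (Multiset.mem_filter.mp hx).2
  have hsum : ((bzDown k μ).sum : ℤ) = (μ.sum : ℤ) + 3 * k - 1 := by
    rw [bzDown, sum_filter_pos, Multiset.sum_cons, Nat.cast_add, sum_map_pred μ hpos, ← hvdef,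
      ← hc]
    omega
  refine ⟨hpos', hsum, ?_⟩
  rcases Nat.eq_zero_or_pos v with hv0 | hv1
  · -- v = 0 case
    have hck : (c : ℤ) + 3 * k = 1 := by omega
    have hsle : μ.sup ≤ 1 := by
      have h2 : (μ.sup : ℤ) ≤ 1 := by omega
      exact_mod_cast h2
    have hall1 : ∀ x ∈ μ, x = 1 := fun x hx => by
      have h1 := hpos x hx
      have h2 := Multiset.le_sup hx
      omega
    have hF20 : F2 = 0 := by
      rw [hF2def, Multiset.filter_eq_nil]
      intro x hx
      have := hall1 x hx; omega
    have hmrep : μ = Multiset.replicate c 1 := Multiset.eq_replicate.mpr ⟨hc.symm, hall1⟩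
    have hν0 : bzDown k μ = 0 := by
      rw [bzDown, ← hc, ← hvdef, Multiset.filter_cons_of_neg _ (by omega), filter_map_pred,
        ← hF2def, hF20, Multiset.map_zero]
    rw [hν0]
    constructor
    · simp only [Multiset.sup_zero, Multiset.card_zero, bot_eq_zero]
      push_cast
      omega
    · rw [bzUp]
      simp only [Multiset.sup_zero, Multiset.erase_zero, Multiset.map_zero, Multiset.card_zero,
        zero_add, bot_eq_zero]
      have h3 : ((⊥:ℕ):ℤ) - ((0:ℕ):ℤ) - 3*(k-1) - 2 = (c:ℤ) := by
        rw [Nat.bot_eq_zero]; push_cast; omega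
      rw [h3, Int.toNat_natCast]
      exact hmrep.symm
  · have hνeq : bzDown k μ = v ::ₘ Multiset.map (fun x => x - 1) F2 := by
      rw [bzDown, ← hc, ← hvdef, Multiset.filter_cons_of_pos (p := fun x => 0 < x) _ hv1, filter_map_pred, ← hF2def]
    have helem : ∀ y ∈ Multiset.map (fun x => x - 1) F2, y ≤ v := by
      intro y hy
      obtain ⟨x, hx, rfl⟩ := Multiset.mem_map.mp hy
      have hxμ := Multiset.mem_of_mem_filter hx
      have hxs := Multiset.le_sup hxμ
      have h4 : (x:ℤ) ≤ (v:ℤ) + 1 := by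
        have h5 : ((x:ℕ):ℤ) ≤ (μ.sup : ℤ) := by exact_mod_cast hxs
        omega
      omega
    have hsupv : (bzDown k μ).sup = v := by
      rw [hνeq, Multiset.sup_cons, sup_eq_left.mpr (Multiset.sup_le.mpr helem)]
    have hcardν : Multiset.card (bzDown k μ) = Multiset.card F2 + 1 := by
      rw [hνeq, Multiset.card_cons, Multiset.card_map]
    constructor
    · rw [hsupv, hcardν]
      push_cast
      omega
    · rw [bzUp, hsupv, hνeq, Multiset.erase_cons_head]
      have hmm : Multiset.map (fun x => x + 1) (Multiset.map (fun x => x - 1) F2) = F2 := by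
        rw [Multiset.map_map]
        have h6 : Multiset.map ((fun x => x + 1) ∘ (fun x => x - 1)) F2 = Multiset.map id F2 :=
          Multiset.map_congr rfl (fun x hx => by
            have := (Multiset.mem_filter.mp hx).2
            simp only [Function.comp_apply, id_eq]; omega)
        rw [h6, Multiset.map_id]
      rw [hmm, Multiset.card_map]
      have h7 : ((v:ℤ) - (Multiset.card F2 : ℤ) - 3*(k-1) - 2).toNat = z := by
        have h8 : ((v:ℤ) - (Multiset.card F2:ℤ) - 3*(k-1) - 2) = (z:ℤ) := by
          push_cast; omega
        rw [h8, Int.toNat_natCast]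
      rw [h7, ← hone, hF2def]
      exact Multiset.filter_add_not _ μ

lemma sum_map_succ (μ : Multiset ℕ) :
    (((Multiset.map (fun x => x + 1) μ).sum : ℕ) : ℤ) = (μ.sum : ℤ) + Multiset.card μ := by
  rw [cast_sum', Multiset.map_map, cast_sum']
  have : Multiset.map ((fun x : ℕ => (x:ℤ)) ∘ (fun x => x + 1)) μ
      = Multiset.map (fun x : ℕ => (x:ℤ) + 1) μ := by
    apply Multiset.map_congr rfl
    intro x _
    simp only [Function.comp_apply]
    omega
  rw [this]
  rw [Multiset.sum_map_add]
  simp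

lemma up_spec (k : ℤ) (μ : Multiset ℕ) (hpos : ∀ x ∈ μ, 0 < x)
    (hcond : ¬ ((μ.sup : ℤ) ≤ (Multiset.card μ : ℤ) + 3 * k)) :
    (∀ x ∈ bzUp k μ, 0 < x) ∧
    ((bzUp k μ).sum : ℤ) = (μ.sum : ℤ) - 3 * k - 2 ∧
    (((bzUp k μ).sup : ℤ) ≤ (Multiset.card (bzUp k μ) : ℤ) + 3 * (k + 1)) ∧
    bzDown (k + 1) (bzUp k μ) = μ := by
  classical
  rcases eq_or_ne μ 0 with rfl | hne
  · -- empty case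
    simp only [Multiset.sup_zero, Multiset.card_zero, Nat.bot_eq_zero, Nat.cast_zero,
      CharP.cast_eq_zero] at hcond
    have hk : k ≤ -1 := by omega
    have heq : bzUp k 0 = Multiset.replicate (-3*k-2).toNat 1 := by
      rw [bzUp]
      simp only [Multiset.sup_zero, Multiset.erase_zero, Multiset.map_zero, Multiset.card_zero,
        zero_add, Nat.bot_eq_zero, Nat.cast_zero, CharP.cast_eq_zero]
      congr 1
      omega
    have hrz : ((-3*k-2).toNat : ℤ) = -3*k-2 := Int.toNat_of_nonneg (by omega)
    have hrpos : 1 ≤ (-3*k-2).toNat := by omega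
    rw [heq]
    refine ⟨?_, ?_, ?_, ?_⟩
    · intro x hx
      rw [Multiset.eq_of_mem_replicate hx]
      norm_num
    · rw [Multiset.sum_replicate, smul_eq_mul, mul_one, Multiset.sum_zero]
      push_cast
      omega
    · have hsup : (Multiset.replicate (-3*k-2).toNat 1).sup = 1 := by
        apply le_antisymm
        · rw [Multiset.sup_le]
          intro b hb
          rw [Multiset.eq_of_mem_replicate hb]
        · apply Multiset.le_sup
          rw [Multiset.mem_replicate]
          omega
      rw [hsup, Multiset.card_replicate]
      omega
    · rw [bzDown, Multiset.card_replicate]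
      have h1 : ((((-3*k-2).toNat : ℕ) : ℤ) + 3 * (k+1) - 1).toNat = 0 := by omega
      rw [h1, Multiset.map_replicate]
      simp only [Nat.sub_self]
      rw [Multiset.filter_cons_of_neg _ (by omega)]
      rw [Multiset.filter_eq_nil.mpr]
      intro x hx
      rw [Multiset.eq_of_mem_replicate hx]
      omega
  · -- nonempty case
    have hs : μ.sup ∈ μ := sup_mem_of_ne_zero hne
    have hs1 : 1 ≤ μ.sup := hpos _ hs
    have hcons : μ.sup ::ₘ μ.erase μ.sup = μ := Multiset.cons_erase hs
    have hcard : Multiset.card (μ.erase μ.sup) + 1 = Multiset.card μ := by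
      conv_rhs => rw [← hcons]
      rw [Multiset.card_cons]
    have hsum : (μ.erase μ.sup).sum + μ.sup = μ.sum := by
      conv_rhs => rw [← hcons]
      rw [Multiset.sum_cons]
      omega
    have hEpos : ∀ x ∈ μ.erase μ.sup, 0 < x := fun x hx => hpos x (Multiset.mem_of_mem_erase hx)
    have hEle : ∀ x ∈ μ.erase μ.sup, x ≤ μ.sup := fun x hx =>
      Multiset.le_sup (Multiset.mem_of_mem_erase hx)
    set E := μ.erase μ.sup with hEdef
    set r : ℕ := ((μ.sup : ℤ) - (Multiset.card E : ℤ) - 3*k - 2).toNat with hrdef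
    have hrz : (r : ℤ) = (μ.sup : ℤ) - (Multiset.card E : ℤ) - 3*k - 2 := by
      rw [hrdef]
      apply Int.toNat_of_nonneg
      omega
    have heq : bzUp k μ = Multiset.map (fun x => x + 1) E + Multiset.replicate r 1 := rfl
    have hcardL : (Multiset.card (bzUp k μ) : ℤ) = (μ.sup : ℤ) - 3*k - 2 := by
      rw [heq, Multiset.card_add, Multiset.card_map, Multiset.card_replicate]
      push_cast
      omega
    refine ⟨?_, ?_, ?_, ?_⟩
    · intro x hx
      rw [heq] at hx
      rcases Multiset.mem_add.mp hx with hx | hx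
      · obtain ⟨y, hy, rfl⟩ := Multiset.mem_map.mp hx
        omega
      · rw [Multiset.eq_of_mem_replicate hx]
        norm_num
    · rw [heq, Multiset.sum_add, Nat.cast_add, sum_map_succ, Multiset.sum_replicate,
        smul_eq_mul, mul_one]
      omega
    · have hsle2 : (bzUp k μ).sup ≤ μ.sup + 1 := by
        rw [Multiset.sup_le]
        intro b hb
        rw [heq] at hb
        rcases Multiset.mem_add.mp hb with hb | hb
        · obtain ⟨y, hy, rfl⟩ := Multiset.mem_map.mp hb
          have := hEle y hy
          omega
        · rw [Multiset.eq_of_mem_replicate hb]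
          omega
      have : ((bzUp k μ).sup : ℤ) ≤ (μ.sup : ℤ) + 1 := by exact_mod_cast hsle2
      omega
    · rw [bzDown]
      have hv : ((Multiset.card (bzUp k μ) : ℤ) + 3 * (k+1) - 1).toNat = μ.sup := by
        rw [hcardL]
        have : (μ.sup : ℤ) - 3*k - 2 + 3*(k+1) - 1 = (μ.sup : ℤ) := by ring
        rw [this, Int.toNat_natCast]
      rw [hv, heq, Multiset.map_add, Multiset.map_map, Multiset.map_replicate]
      have hid : Multiset.map ((fun x => x - 1) ∘ (fun x => x + 1)) E = E := by
        have : Multiset.map ((fun x => x - 1) ∘ (fun x => x + 1)) E = Multiset.map id E :=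
          Multiset.map_congr rfl (fun x _ => by simp only [Function.comp_apply, id_eq]; omega)
        rw [this, Multiset.map_id]
      rw [hid]
      simp only [show (1:ℕ) - 1 = 0 from rfl]
      rw [Multiset.filter_cons_of_pos (p := fun x => 0 < x) _ hs1, Multiset.filter_add,
        Multiset.filter_eq_self.mpr hEpos, Multiset.filter_eq_nil.mpr (fun x hx => by
          rw [Multiset.eq_of_mem_replicate hx]; omega), add_zero]
      exact hcons
def pent (k : ℤ) : ℤ := k * (3 * k + 1) / 2

lemma two_mul_pent (k : ℤ) : 2 * pent k = k * (3 * k + 1) := by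
  rcases Int.even_or_odd k with ⟨a, rfl⟩ | ⟨a, rfl⟩
  · rw [pent]
    have h : (a + a) * (3 * (a + a) + 1) = 2 * (a * (3 * (a + a) + 1)) := by ring
    rw [h, Int.mul_ediv_cancel_left _ two_ne_zero]
  · rw [pent]
    have h : (2*a+1) * (3 * (2*a+1) + 1) = 2 * ((2*a+1) * (3*a + 2)) := by ring
    rw [h, Int.mul_ediv_cancel_left _ two_ne_zero]

lemma natAbs_le_pent (k : ℤ) : (k.natAbs : ℤ) ≤ pent k := by
  have h := two_mul_pent k
  rcases lt_trichotomy k 0 with hk | rfl | hk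
  · rw [Int.ofNat_natAbs_of_nonpos hk.le]
    have hp : 0 ≤ (-k) * (-(3*k+3)) := mul_nonneg (by omega) (by omega)
    have he : (-k) * (-(3*k+3)) = k*(3*k+1) + 2*k := by ring
    omega
  · simp [pent]
  · rw [Int.natAbs_of_nonneg hk.le]
    have hp : 0 ≤ k * (3*k-1) := mul_nonneg (by omega) (by omega)
    have he : k * (3*k-1) = k*(3*k+1) - 2*k := by ring
    omega

lemma pent_nonneg (k : ℤ) : 0 ≤ pent k := le_trans (by positivity) (natAbs_le_pent k)

lemma pent_zero : pent 0 = 0 := rfl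

lemma pent_sub_pred (k : ℤ) : pent k - pent (k - 1) = 3 * k - 1 := by
  have h1 := two_mul_pent k
  have h2 := two_mul_pent (k - 1)
  have h3 : k * (3 * k + 1) - (k-1) * (3*(k-1)+1) = 6 * k - 2 := by ring
  omega

lemma pent_pos {k : ℤ} (hk : k ≠ 0) : 1 ≤ pent k := by
  have := natAbs_le_pent k
  have : 1 ≤ (k.natAbs : ℤ) := by
    have := Int.natAbs_pos.mpr hk
    omega
  omega

lemma neg_one_pow_succ_natAbs (k : ℤ) : (-1:ℤ)^((k+1).natAbs) = -(-1:ℤ)^(k.natAbs) := by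
  rcases Nat.even_or_odd k.natAbs with h | h
  · have h1 : Odd ((k+1).natAbs) := by
      rw [Nat.odd_iff]; rw [Nat.even_iff] at h; omega
    rw [Odd.neg_one_pow h1, Even.neg_one_pow h]
  · have h1 : Even ((k+1).natAbs) := by
      rw [Nat.even_iff]; rw [Nat.odd_iff] at h; omega
    rw [Even.neg_one_pow h1, Odd.neg_one_pow h]
    norm_num

lemma neg_one_pow_pred_natAbs (k : ℤ) : (-1:ℤ)^((k-1).natAbs) = -(-1:ℤ)^(k.natAbs) := by
  have h := neg_one_pow_succ_natAbs (k-1)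
  rw [sub_add_cancel] at h
  rw [h]
  ring

def PsetZ (x : ℤ) : Finset (Multiset ℕ) := if 0 ≤ x then Pset x.toNat else ∅

lemma mem_PsetZ {x : ℤ} {μ : Multiset ℕ} :
    μ ∈ PsetZ x ↔ ((μ.sum : ℤ) = x ∧ ∀ i ∈ μ, 0 < i) := by
  rw [PsetZ]
  split_ifs with h
  · rw [mem_Pset]
    constructor
    · rintro ⟨h1, h2⟩
      exact ⟨by omega, h2⟩
    · rintro ⟨h1, h2⟩
      exact ⟨by omega, h2⟩
  · simp only [Finset.notMem_empty, false_iff, not_and]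
    intro h1
    omega

lemma partitionCount_eq_card (x : ℤ) : partitionCount x = ((PsetZ x).card : ℤ) := by
  rw [partitionCount, PsetZ]
  split_ifs with h
  · rw [card_Pset]
  · simp

def bz (q : (_ : ℤ) × Multiset ℕ) : (_ : ℤ) × Multiset ℕ :=
  if (q.2.sup : ℤ) ≤ (Multiset.card q.2 : ℤ) + 3 * q.1 then ⟨q.1 - 1, bzDown q.1 q.2⟩
  else ⟨q.1 + 1, bzUp q.1 q.2⟩

lemma euler_rec (t N : ℕ) (ht : 1 ≤ t) (htN : t ≤ N) :
    ∑ k ∈ Finset.Icc (-(N:ℤ)) (N:ℤ), (-1:ℤ)^k.natAbs * partitionCount ((t:ℤ) - pent k) = 0 := by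
  classical
  have hterm : ∀ k : ℤ, (-1:ℤ)^k.natAbs * partitionCount ((t:ℤ) - pent k)
      = ∑ _μ ∈ PsetZ ((t:ℤ) - pent k), (-1:ℤ)^k.natAbs := by
    intro k
    rw [Finset.sum_const, partitionCount_eq_card, nsmul_eq_mul, mul_comm]
  simp_rw [hterm]
  rw [← Finset.sum_sigma (Finset.Icc (-(N:ℤ)) (N:ℤ)) (fun k => PsetZ ((t:ℤ) - pent k))
    (fun q => (-1:ℤ)^q.1.natAbs)]
  apply Finset.sum_involution (fun q _ => bz q)
  · -- signs cancel
    rintro ⟨k, μ⟩ _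
    rw [bz]
    dsimp only
    split_ifs
    · dsimp only
      rw [neg_one_pow_pred_natAbs]
      ring
    · dsimp only
      rw [neg_one_pow_succ_natAbs]
      ring
  · -- no fixed point
    rintro ⟨k, μ⟩ _ _
    rw [bz]
    dsimp only
    split_ifs
    · intro hcontra
      have h2 := congrArg Sigma.fst hcontra
      dsimp at h2
      omega
    · intro hcontra
      have h2 := congrArg Sigma.fst hcontra
      dsimp at h2
      omega
  · -- maps into the set
    rintro ⟨k, μ⟩ hq
    rw [Finset.mem_sigma] at hq
    obtain ⟨hk, hμ⟩ := hq
    rw [Finset.mem_Icc] at hk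
    rw [mem_PsetZ] at hμ
    obtain ⟨hsum, hpos⟩ := hμ
    dsimp only at hk hsum hpos
    rw [bz]
    dsimp only
    split_ifs with hcnd
    · have hkk : μ = 0 → 1 ≤ k := by
        intro h0
        subst h0
        simp only [Multiset.sum_zero, Nat.cast_zero] at hsum
        have hpk : pent k = t := by omega
        have hk0 : k ≠ 0 := by
          intro h; rw [h, pent_zero] at hpk; omega
        simp only [Multiset.sup_zero, Multiset.card_zero, Nat.bot_eq_zero, Nat.cast_zero,
          CharP.cast_eq_zero] at hcnd
        omega
      obtain ⟨hp1, hp2, -, -⟩ := down_spec k μ hpos hcnd hkk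
      have hsum' : ((bzDown k μ).sum : ℤ) = (t:ℤ) - pent (k-1) := by
        have := pent_sub_pred k
        omega
      rw [Finset.mem_sigma]
      dsimp only
      constructor
      · rw [Finset.mem_Icc]
        have h0 : (0:ℤ) ≤ (t:ℤ) - pent (k-1) := by
          rw [← hsum']
          positivity
        have h1 := natAbs_le_pent (k-1)
        omega
      · rw [mem_PsetZ]
        exact ⟨hsum', hp1⟩
    · obtain ⟨hp1, hp2, -, -⟩ := up_spec k μ hpos hcnd
      have hps := pent_sub_pred (k+1)
      have hsum' : ((bzUp k μ).sum : ℤ) = (t:ℤ) - pent (k+1) := by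
        have h3 : k + 1 - 1 = k := by ring
        rw [h3] at hps
        omega
      rw [Finset.mem_sigma]
      dsimp only
      constructor
      · rw [Finset.mem_Icc]
        have h0 : (0:ℤ) ≤ (t:ℤ) - pent (k+1) := by
          rw [← hsum']
          positivity
        have h1 := natAbs_le_pent (k+1)
        omega
      · rw [mem_PsetZ]
        exact ⟨hsum', hp1⟩
  · -- involution
    rintro ⟨k, μ⟩ hq
    rw [Finset.mem_sigma] at hq
    obtain ⟨hk, hμ⟩ := hq
    rw [mem_PsetZ] at hμ
    obtain ⟨hsum, hpos⟩ := hμ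
    dsimp only at hsum hpos
    show bz (bz ⟨k, μ⟩) = ⟨k, μ⟩
    by_cases hcnd : (μ.sup : ℤ) ≤ (Multiset.card μ : ℤ) + 3 * k
    · have hkk : μ = 0 → 1 ≤ k := by
        intro h0
        subst h0
        simp only [Multiset.sum_zero, Nat.cast_zero] at hsum
        have hpk : pent k = t := by omega
        have hk0 : k ≠ 0 := by
          intro h; rw [h, pent_zero] at hpk; omega
        simp only [Multiset.sup_zero, Multiset.card_zero, Nat.bot_eq_zero, Nat.cast_zero,
          CharP.cast_eq_zero] at hcnd
        omega
      obtain ⟨-, -, hd3, hd4⟩ := down_spec k μ hpos hcnd hkk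
      have hb1 : bz ⟨k, μ⟩ = ⟨k - 1, bzDown k μ⟩ := by
        rw [bz]
        exact if_pos hcnd
      have hb2 : bz ⟨k - 1, bzDown k μ⟩ = ⟨k, μ⟩ := by
        rw [bz]
        dsimp only
        rw [if_neg hd3, show k - 1 + 1 = k by ring, hd4]
      rw [hb1, hb2]
    · obtain ⟨-, -, hu3, hu4⟩ := up_spec k μ hpos hcnd
      have hb1 : bz ⟨k, μ⟩ = ⟨k + 1, bzUp k μ⟩ := by
        rw [bz]
        exact if_neg hcnd
      have hb2 : bz ⟨k + 1, bzUp k μ⟩ = ⟨k, μ⟩ := by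
        rw [bz]
        dsimp only
        rw [if_pos hu3, show k + 1 - 1 = k by ring, hu4]
      rw [hb1, hb2]

lemma partitionCount_neg {t : ℤ} (h : t < 0) : partitionCount t = 0 := by
  rw [partitionCount, if_neg (not_le.mpr h)]

lemma partitionCount_coe (a : ℕ) : partitionCount (a : ℤ) = ((Pset a).card : ℤ) := by
  rw [partitionCount, if_pos (Int.ofNat_nonneg a), card_Pset]
  simp

lemma partitionCount_zero : partitionCount 0 = 1 := by
  rw [partitionCount, if_pos le_rfl]
  norm_num
  decide

noncomputable def eulerSum (m a : ℕ) : ℤ :=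
  ∑ k ∈ Finset.Icc (-(a:ℤ)) (a:ℤ), (-1:ℤ)^k.natAbs * partitionCount ((a:ℤ) - m * pent k)

lemma pent_big {k : ℤ} {a : ℕ} (h : ¬ (-(a:ℤ) ≤ k ∧ k ≤ a)) : (a:ℤ) < pent k := by
  have h1 := natAbs_le_pent k
  omega

lemma m_pent_le {m : ℕ} (hm : 0 < m) (k : ℤ) : pent k ≤ (m:ℤ) * pent k := by
  have h1 : (1:ℤ) ≤ (m:ℤ) := by exact_mod_cast hm
  nlinarith [pent_nonneg k]

lemma eulerSum_ext (m a N : ℕ) (hm : 0 < m) (haN : a ≤ N) :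
    eulerSum m a = ∑ k ∈ Finset.Icc (-(N:ℤ)) (N:ℤ),
      (-1:ℤ)^k.natAbs * partitionCount ((a:ℤ) - m * pent k) := by
  rw [eulerSum]
  apply Finset.sum_subset
  · apply Finset.Icc_subset_Icc <;> omega
  · intro k _ hnk
    simp only [Finset.mem_Icc] at hnk
    have h1 : (a:ℤ) < pent k := pent_big hnk
    have h2 := m_pent_le hm k
    rw [partitionCount_neg (by omega), mul_zero]

lemma conv2 (m n : ℕ) (hm : 0 < m) :
    ∑ j ∈ (Finset.range (n+1)).filter (fun j => m * j ≤ n),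
      partitionCount (j:ℤ) * eulerSum m (n - m*j) = partitionCount (n:ℤ) := by
  classical
  set A := (Finset.range (n+1)).filter (fun j => m * j ≤ n) with hA
  set K := Finset.Icc (-(n:ℤ)) (n:ℤ) with hK
  have step1 : ∑ j ∈ A, partitionCount (j:ℤ) * eulerSum m (n - m*j)
      = ∑ j ∈ A, ∑ k ∈ K, (-1:ℤ)^k.natAbs *
          (partitionCount (j:ℤ) * partitionCount ((n:ℤ) - m*j - m * pent k)) := by
    apply Finset.sum_congr rfl
    intro j hj
    obtain ⟨hj1, hj2⟩ := Finset.mem_filter.mp hj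
    rw [eulerSum_ext m (n - m*j) n hm (by omega), Finset.mul_sum]
    apply Finset.sum_congr rfl
    intro k _
    have hcast : ((n - m*j : ℕ) : ℤ) = (n:ℤ) - (m:ℤ)*(j:ℤ) := by
      push_cast [hj2]
      omega
    rw [hcast]
    ring
  rw [step1, Finset.sum_comm]
  have step2 : ∀ k ∈ K, ∑ j ∈ A, (-1:ℤ)^k.natAbs *
        (partitionCount (j:ℤ) * partitionCount ((n:ℤ) - m*j - m * pent k))
      = ∑ s ∈ Finset.range (n+1), (-1:ℤ)^k.natAbs *
          (partitionCount ((s:ℤ) - pent k) * partitionCount ((n:ℤ) - m*s)) := by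
    intro k _
    have hpk : ((pent k).toNat : ℤ) = pent k := Int.toNat_of_nonneg (pent_nonneg k)
    rw [← Finset.sum_filter_of_ne (p := fun j => m*j + m*(pent k).toNat ≤ n)
      (s := A) (by
        intro j _ hne
        by_contra hgt
        apply hne
        have h1 : n < m*j + m*(pent k).toNat := Nat.not_le.mp hgt
        have h2 : (n:ℤ) < (m:ℤ)*(j:ℤ) + (m:ℤ)*(((pent k).toNat : ℕ) : ℤ) := by
          exact_mod_cast h1
        rw [hpk] at h2
        rw [partitionCount_neg (t := (n:ℤ) - m*j - m * pent k) (by omega), mul_zero, mul_zero])]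
    rw [← Finset.sum_filter_of_ne (p := fun s => (pent k).toNat ≤ s ∧ m*s ≤ n)
      (s := Finset.range (n+1)) (by
        intro s _ hne
        by_contra hgt
        apply hne
        rw [not_and_or] at hgt
        rcases hgt with hgt | hgt
        · have h1 : s < (pent k).toNat := Nat.not_le.mp hgt
          have h2 : (s:ℤ) < (((pent k).toNat : ℕ) : ℤ) := by exact_mod_cast h1
          rw [hpk] at h2
          rw [partitionCount_neg (t := (s:ℤ) - pent k) (by omega), zero_mul, mul_zero]
        · have h1 : n < m*s := Nat.not_le.mp hgt
          have h2 : (n:ℤ) < (m:ℤ)*(s:ℤ) := by exact_mod_cast h1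
          rw [partitionCount_neg (t := (n:ℤ) - m*s) (by omega), mul_zero, mul_zero])]
    apply Finset.sum_nbij' (i := fun j => j + (pent k).toNat)
      (j := fun s => s - (pent k).toNat)
    · intro a ha
      simp only [hA, Finset.mem_filter, Finset.mem_range] at ha ⊢
      obtain ⟨⟨ha1, ha2⟩, ha3⟩ := ha
      have h4 : m * (a + (pent k).toNat) = m*a + m*(pent k).toNat := by ring
      have h5 : a + (pent k).toNat ≤ m * (a + (pent k).toNat) :=
        Nat.le_mul_of_pos_left _ hm
      omega
    · intro s hs
      simp only [hA, Finset.mem_filter, Finset.mem_range] at hs ⊢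
      obtain ⟨hs1, hs2, hs3⟩ := hs
      have h4 : m * (s - (pent k).toNat) + m * (pent k).toNat = m * s := by
        rw [← Nat.mul_add, Nat.sub_add_cancel hs2]
      have h5 : m * (s - (pent k).toNat) ≤ m * s := Nat.mul_le_mul_left m (Nat.sub_le _ _)
      omega
    · intro a _
      omega
    · intro s hs
      simp only [Finset.mem_filter, Finset.mem_range] at hs
      omega
    · intro a ha
      simp only [hA, Finset.mem_filter, Finset.mem_range] at ha
      have e1 : ((a + (pent k).toNat : ℕ) : ℤ) = (a:ℤ) + pent k := by
        push_cast [hpk]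
        ring
      rw [e1]
      have e2 : (a:ℤ) + pent k - pent k = (a:ℤ) := by ring
      have e3 : (n:ℤ) - (m:ℤ) * ((a:ℤ) + pent k) = (n:ℤ) - m*a - m * pent k := by ring
      rw [e2, e3]
  rw [Finset.sum_congr rfl step2, Finset.sum_comm]
  have inner : ∀ s ∈ Finset.range (n+1),
      ∑ k ∈ K, (-1:ℤ)^k.natAbs *
          (partitionCount ((s:ℤ) - pent k) * partitionCount ((n:ℤ) - m*s))
        = (∑ k ∈ K, (-1:ℤ)^k.natAbs * partitionCount ((s:ℤ) - pent k))
            * partitionCount ((n:ℤ) - m*s) := by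
    intro s _
    rw [Finset.sum_mul]
    apply Finset.sum_congr rfl
    intro k _
    ring
  rw [Finset.sum_congr rfl inner]
  rw [Finset.sum_eq_single_of_mem 0 (by simp)]
  · have hin : ∑ k ∈ K, (-1:ℤ)^k.natAbs * partitionCount (((0:ℕ):ℤ) - pent k)
        = 1 := by
      rw [Finset.sum_eq_single_of_mem 0 (by
        rw [hK, Finset.mem_Icc]
        constructor <;> omega)]
      · simp [pent_zero, partitionCount_zero]
      · intro k _ hk0
        rw [partitionCount_neg (by
          have := pent_pos hk0
          push_cast
          omega), mul_zero]
    rw [hin, one_mul]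
    norm_num
  · intro s _ hs0
    rw [euler_rec s n (by omega) (by
      simp only [Finset.mem_range] at *
      omega), zero_mul]

lemma qcount_eq (m : ℕ) (hm : 0 < m) : ∀ n, ((Qset m n).card : ℤ) = eulerSum m n := by
  intro n
  induction n using Nat.strong_induction_on with
  | _ n ih =>
    have h1 := conv1 m n hm
    have h2 := conv2 m n hm
    set A := (Finset.range (n+1)).filter (fun j => m * j ≤ n) with hA
    have h1' : ∑ j ∈ A, partitionCount (j:ℤ) * ((Qset m (n - m*j)).card : ℤ)
        = partitionCount (n:ℤ) := by
      rw [partitionCount_coe, h1]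
      push_cast
      apply Finset.sum_congr rfl
      intro j _
      rw [partitionCount_coe]
    have key : ∑ j ∈ A, partitionCount (j:ℤ) *
        (((Qset m (n - m*j)).card : ℤ) - eulerSum m (n - m*j)) = 0 := by
      simp_rw [mul_sub]
      rw [Finset.sum_sub_distrib, h1', h2, sub_self]
    have h0A : (0:ℕ) ∈ A := by
      simp [hA]
    rw [Finset.sum_eq_single_of_mem 0 h0A] at key
    · rw [show n - m*0 = n by simp] at key
      rw [show ((0:ℕ):ℤ) = (0:ℤ) by simp, partitionCount_zero, one_mul, sub_eq_zero] at key
      exact key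
    · intro j hj hj0
      obtain ⟨hj1, hj2⟩ := Finset.mem_filter.mp hj
      have hmj : 1 ≤ m*j := Nat.mul_pos hm (Nat.pos_of_ne_zero hj0)
      have hlt : n - m*j < n := by omega
      rw [ih _ hlt, sub_self, mul_zero]

lemma pent_div_plus (m : ℕ) (k : ℤ) : (m:ℤ) * k * (3*k+1) / 2 = (m:ℤ) * pent k := by
  have h := two_mul_pent k
  have h3 : (m:ℤ) * k * (3*k+1) = 2 * ((m:ℤ) * pent k) := by
    rw [show (2:ℤ) * ((m:ℤ) * pent k) = (m:ℤ) * (2 * pent k) from by ring, h]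
    ring
  rw [h3, Int.mul_ediv_cancel_left _ two_ne_zero]

lemma pent_div_minus (m : ℕ) (k : ℤ) : (m:ℤ) * k * (3*k-1) / 2 = (m:ℤ) * pent (-k) := by
  have h := two_mul_pent (-k)
  have h3 : (m:ℤ) * k * (3*k-1) = 2 * ((m:ℤ) * pent (-k)) := by
    rw [show (2:ℤ) * ((m:ℤ) * pent (-k)) = (m:ℤ) * (2 * pent (-k)) from by ring, h]
    ring
  rw [h3, Int.mul_ediv_cancel_left _ two_ne_zero]

/-- For all positive integers `m` and `n`, the number of partitions of `n` into parts not
divisible by `m` equals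
`p(n) + ∑_{k ≥ 1} (-1)^k (p(n - m k (3k-1)/2) + p(n - m k (3k+1)/2))`,
where `p(t) = 0` for `t < 0`.  All nonzero terms occur for `1 ≤ k ≤ n`. -/
theorem partitions_not_div_eq_pentagonal_sum (m n : ℕ) (hm : 0 < m) (hn : 0 < n) :
    (Fintype.card {π : n.Partition // ∀ j ∈ π.parts, ¬ m ∣ j} : ℤ) =
      partitionCount (n : ℤ) +
        ∑ k ∈ Finset.Icc 1 n, (-1 : ℤ) ^ k *
          (partitionCount ((n : ℤ) - (m : ℤ) * k * (3 * k - 1) / 2) +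
           partitionCount ((n : ℤ) - (m : ℤ) * k * (3 * k + 1) / 2)) := by
  classical
  have hcardQ : Fintype.card {π : n.Partition // ∀ j ∈ π.parts, ¬ m ∣ j} = (Qset m n).card := by
    rw [Fintype.card_subtype]
    apply Finset.card_bij (i := fun π _ => π.parts)
    · intro π hπ
      rw [Finset.mem_filter] at hπ
      rw [mem_Qset]
      exact ⟨⟨π.parts_sum, fun x hx => π.parts_pos hx⟩, hπ.2⟩
    · intro π₁ _ π₂ _ h
      cases π₁; cases π₂; simpa using h
    · intro μ hμ
      rw [mem_Qset] at hμ
      obtain ⟨⟨hsum, hpos⟩, hdvd⟩ := hμ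
      exact ⟨⟨μ, fun hi => hpos _ hi, hsum⟩, by simpa using hdvd, rfl⟩
  rw [hcardQ, qcount_eq m hm n, eulerSum]
  have hsplit : Finset.Icc (-(n:ℤ)) (n:ℤ)
      = Finset.Icc (-(n:ℤ)) (-1) ∪ Finset.Icc (0:ℤ) (n:ℤ) := by
    ext x
    simp only [Finset.mem_Icc, Finset.mem_union]
    omega
  have hdisj : Disjoint (Finset.Icc (-(n:ℤ)) (-1)) (Finset.Icc (0:ℤ) (n:ℤ)) := by
    rw [Finset.disjoint_left]
    intro x h1 h2
    simp only [Finset.mem_Icc] at h1 h2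
    omega
  rw [hsplit, Finset.sum_union hdisj]
  have hsplit2 : Finset.Icc (0:ℤ) (n:ℤ) = insert 0 (Finset.Icc (1:ℤ) (n:ℤ)) := by
    ext x
    simp only [Finset.mem_Icc, Finset.mem_insert]
    omega
  rw [hsplit2, Finset.sum_insert (by simp)]
  have hg0 : (-1:ℤ)^((0:ℤ).natAbs) * partitionCount ((n:ℤ) - m * pent 0) = partitionCount (n:ℤ) := by
    simp [pent_zero]
  rw [hg0]
  have hneg : ∑ k ∈ Finset.Icc (-(n:ℤ)) (-1),
        (-1:ℤ)^k.natAbs * partitionCount ((n:ℤ) - m * pent k)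
      = ∑ k ∈ Finset.Icc 1 n, (-1:ℤ)^k *
          partitionCount ((n:ℤ) - (m:ℤ) * k * (3*k-1) / 2) := by
    apply Finset.sum_nbij' (i := fun k : ℤ => (-k).toNat) (j := fun k : ℕ => -(k:ℤ))
    · intro a ha
      simp only [Finset.mem_Icc] at ha ⊢
      omega
    · intro a ha
      simp only [Finset.mem_Icc] at ha ⊢
      omega
    · intro a ha
      simp only [Finset.mem_Icc] at ha
      omega
    · intro a ha
      simp only [Finset.mem_Icc] at ha
      omega
    · intro a ha
      simp only [Finset.mem_Icc] at ha
      have h1 : (((-a).toNat : ℕ) : ℤ) = -a := by omega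
      have h2 : (-1:ℤ)^((-a).toNat) = (-1:ℤ)^(a.natAbs) := by
        congr 1
        omega
      rw [h2, pent_div_minus m ((-a).toNat : ℤ)]
      rw [h1, neg_neg]
  rw [hneg]
  have hpos' : ∑ k ∈ Finset.Icc (1:ℤ) (n:ℤ),
        (-1:ℤ)^k.natAbs * partitionCount ((n:ℤ) - m * pent k)
      = ∑ k ∈ Finset.Icc 1 n, (-1:ℤ)^k *
          partitionCount ((n:ℤ) - (m:ℤ) * k * (3*k+1) / 2) := by
    apply Finset.sum_nbij' (i := fun k : ℤ => k.toNat) (j := fun k : ℕ => (k:ℤ))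
    · intro a ha
      simp only [Finset.mem_Icc] at ha ⊢
      omega
    · intro a ha
      simp only [Finset.mem_Icc] at ha ⊢
      omega
    · intro a ha
      simp only [Finset.mem_Icc] at ha
      omega
    · intro a ha
      simp only [Finset.mem_Icc] at ha
      omega
    · intro a ha
      simp only [Finset.mem_Icc] at ha
      have h1 : ((a.toNat : ℕ) : ℤ) = a := by omega
      have h2 : (-1:ℤ)^(a.toNat) = (-1:ℤ)^(a.natAbs) := by
        congr 1
        omega
      rw [h2, pent_div_plus m ((a.toNat : ℕ) : ℤ), h1]
  rw [hpos']
  rw [show ∀ (x y z : ℤ), x + (y + z) = y + (x + z) from fun x y z => by ring]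
  rw [← Finset.sum_add_distrib]
  apply congrArg
  apply Finset.sum_congr rfl
  intro k _
  ring
end

section
/- For all positive integers m and n, the number of partitions of n into parts not divisible by m is equal to the number of partitions of n in which each part appears fewer than m times (Glaisher's identity). -/
open PowerSeries Finset
open scoped Classical

noncomputable section GlaisherAux

variable {α : Type*}

private def indSeries (α : Type*) [Semiring α] (s : Set ℕ) : PowerSeries α :=
  PowerSeries.mk fun n => if n ∈ s then 1 else 0

private theorem coeff_indSeries (s : Set ℕ) [Semiring α] (n : ℕ) :
    coeff (R := α) n (indSeries _ s) = if n ∈ s then 1 else 0 :=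
  coeff_mk _ _

-- main workhorse, copied from Archive/Wiedijk100Theorems/Partition.lean
private theorem partialGF_prop' (α : Type*) [CommSemiring α] (n : ℕ) (s : Finset ℕ) (hs : ∀ i ∈ s, 0 < i)
    (c : ℕ → Set ℕ) (hc : ∀ i, i ∉ s → 0 ∈ c i) :
    #{p : n.Partition | (∀ j, p.parts.count j ∈ c j) ∧ ∀ j ∈ p.parts, j ∈ s} =
      coeff n (∏ i ∈ s, indSeries α ((· * i) '' c i)) := by
  simp_rw [coeff_prod, coeff_indSeries, prod_boole, sum_boole]
  apply congr_arg
  simp only [mem_univ, forall_true_left, not_and, not_forall, exists_prop,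
    Set.mem_image, not_exists]
  set φ : (a : Nat.Partition n) →
    a ∈ filter (fun p ↦ (∀ (j : ℕ), Multiset.count j p.parts ∈ c j) ∧ ∀ j ∈ p.parts, j ∈ s) univ →
    ℕ →₀ ℕ := fun p _ => {
      toFun := fun i => Multiset.count i p.parts • i
      support := Finset.filter (fun i => i ≠ 0) p.parts.toFinset
      mem_support_toFun := fun a => by
        simp only [smul_eq_mul, ne_eq, mul_eq_zero, Multiset.count_eq_zero]
        rw [not_or, not_not]
        simp only [Multiset.mem_toFinset, not_not, mem_filter] }
  refine Finset.card_bij φ ?_ ?_ ?_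
  · intro a ha
    simp only [φ, not_forall, not_exists, not_and, exists_prop, mem_filter]
    rw [mem_finsuppAntidiag]
    dsimp only [ne_eq, smul_eq_mul, id_eq, eq_mpr_eq_cast, le_eq_subset, Finsupp.coe_mk]
    simp only [mem_univ, forall_true_left, not_and, not_forall, exists_prop,
      mem_filter, true_and] at ha
    refine ⟨⟨?_, fun i ↦ ?_⟩, fun i _ ↦ ⟨a.parts.count i, ha.1 i, rfl⟩⟩
    · conv_rhs => simp [← a.parts_sum]
      rw [sum_multiset_count_of_subset _ s]
      · simp only [smul_eq_mul]
      · intro i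
        simp only [Multiset.mem_toFinset, not_not, mem_filter]
        apply ha.2
    · simp only [ne_eq, Multiset.mem_toFinset, not_not, mem_filter, and_imp]
      exact fun hi _ ↦ ha.2 i hi
  · intro p₁ hp₁ p₂ hp₂ h
    apply Nat.Partition.ext
    simp only [true_and, mem_univ, mem_filter] at hp₁ hp₂
    ext i
    simp only [φ, ne_eq, Multiset.mem_toFinset, not_not, smul_eq_mul, Finsupp.mk.injEq] at h
    by_cases hi : i = 0
    · rw [hi]
      rw [Multiset.count_eq_zero_of_notMem]
      · rw [Multiset.count_eq_zero_of_notMem]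
        intro a; exact Nat.lt_irrefl 0 (hs 0 (hp₂.2 0 a))
      intro a; exact Nat.lt_irrefl 0 (hs 0 (hp₁.2 0 a))
    · rw [← mul_left_inj' hi]
      rw [funext_iff] at h
      exact h.2 i
  · simp only [φ, mem_filter, mem_finsuppAntidiag, mem_univ, exists_prop, true_and, and_assoc]
    rintro f ⟨hf, hf₃, hf₄⟩
    have hf' : f ∈ finsuppAntidiag s n := mem_finsuppAntidiag.mpr ⟨hf, hf₃⟩
    simp only [mem_finsuppAntidiag] at hf'
    refine ⟨⟨∑ i ∈ s, Multiset.replicate (f i / i) i, ?_, ?_⟩, ?_, ?_, ?_⟩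
    · intro i hi
      simp only [exists_prop, Multiset.mem_sum, mem_map, Function.Embedding.coeFn_mk] at hi
      rcases hi with ⟨t, ht, z⟩
      apply hs
      rwa [Multiset.eq_of_mem_replicate z]
    · simp_rw [Multiset.sum_sum, Multiset.sum_replicate, Nat.nsmul_eq_mul]
      rw [← hf'.1]
      refine sum_congr rfl fun i hi => Nat.div_mul_cancel ?_
      rcases hf₄ i hi with ⟨w, _, hw₂⟩
      rw [← hw₂]
      exact dvd_mul_left _ _
    · intro i
      simp_rw [Multiset.count_sum', Multiset.count_replicate, sum_ite_eq']
      split_ifs with h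
      · rcases hf₄ i h with ⟨w, hw₁, hw₂⟩
        rwa [← hw₂, Nat.mul_div_cancel _ (hs i h)]
      · exact hc _ h
    · intro i hi
      rw [Multiset.mem_sum] at hi
      rcases hi with ⟨j, hj₁, hj₂⟩
      rwa [Multiset.eq_of_mem_replicate hj₂]
    · ext i
      simp_rw [Multiset.count_sum', Multiset.count_replicate, sum_ite_eq']
      simp only [ne_eq, Multiset.mem_toFinset, not_not, smul_eq_mul, ite_mul,
        zero_mul, Finsupp.coe_mk]
      split_ifs with h
      · apply Nat.div_mul_cancel
        rcases hf₄ i h with ⟨w, _, hw₂⟩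
        apply Dvd.intro_left _ hw₂
      · apply symm
        rw [← Finsupp.notMem_support_iff]
        exact notMem_mono hf'.2 h


-- copy of archive num_series'
private theorem num_series'' [Field α] (i : ℕ) :
    (1 - (X : PowerSeries α) ^ (i + 1))⁻¹ = indSeries α {k | i + 1 ∣ k} := by
  rw [PowerSeries.inv_eq_iff_mul_eq_one]
  · ext n
    cases n with
    | zero => simp [mul_sub, zero_pow, indSeries, PowerSeries.constantCoeff_mk, constantCoeff_X]
    | succ n =>
      simp only [coeff_one, if_false, mul_sub, mul_one, indSeries, coeff_mk,
        LinearMap.map_sub, reduceCtorEq]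
      simp_rw [coeff_mul, coeff_X_pow, coeff_mk, @boole_mul _ _ _ _]
      erw [@sum_ite _ _ _ _ _ (fun _ => Classical.propDecidable _), sum_ite]
      simp_rw [@filter_filter _ _ _ _ _, sum_const_zero, add_zero, sum_const, nsmul_eq_mul, mul_one,
        sub_eq_iff_eq_add, zero_add]
      symm
      split_ifs with h
      · suffices #{a ∈ antidiagonal (n + 1) | i + 1 ∣ a.fst ∧ a.snd = i + 1} = 1 by
          simp only [Set.mem_setOf_eq]; convert congr_arg ((↑) : ℕ → α) this; norm_cast
        rw [card_eq_one]
        cases' h with p hp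
        refine ⟨((i + 1) * (p - 1), i + 1), ?_⟩
        ext ⟨a₁, a₂⟩
        simp only [mem_filter, Prod.mk_inj, HasAntidiagonal.mem_antidiagonal, mem_singleton]
        constructor
        · rintro ⟨a_left, ⟨a, rfl⟩, rfl⟩
          refine ⟨?_, rfl⟩
          rw [Nat.mul_sub_left_distrib, ← hp, ← a_left, mul_one, Nat.add_sub_cancel]
        · rintro ⟨rfl, rfl⟩
          match p with
          | 0 => rw [mul_zero] at hp; cases hp
          | p + 1 => rw [hp]; simp [mul_add]
      · suffices #{a ∈ antidiagonal (n + 1) | i + 1 ∣ a.fst ∧ a.snd = i + 1} = 0 by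
          simp only [Set.mem_setOf_eq]; convert congr_arg ((↑) : ℕ → α) this; norm_cast
        rw [card_eq_zero]
        apply eq_empty_of_forall_notMem
        simp only [Prod.forall, mem_filter, not_and, HasAntidiagonal.mem_antidiagonal]
        rintro _ h₁ h₂ ⟨a, rfl⟩ rfl
        apply h
        simp [← h₂]
  · simp [zero_pow]

private theorem ind_geom [Semiring α] (i m : ℕ) (hi : 0 < i) :
    indSeries α ((· * i) '' Set.Iio m) = ∑ k ∈ range m, (X : PowerSeries α) ^ (k * i) := by
  have hinj : Set.InjOn (· * i) ↑(range m) := fun a _ b _ h =>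
    Nat.eq_of_mul_eq_mul_right hi h
  ext n
  rw [map_sum]
  simp_rw [coeff_X_pow]
  have h1 := Finset.sum_image (g := (· * i)) (s := range m) (f := fun j => if n = j then (1:α) else 0)
    (fun a ha b hb h => hinj ha hb h)
  rw [← h1, Finset.sum_ite_eq ((range m).image (· * i)) n (fun _ => (1:α))]
  simp only [indSeries, coeff_mk]
  have : ((· * i) '' Set.Iio m : Set ℕ) = ↑((range m).image (· * i)) := by
    ext x; simp [Set.mem_image]
  rw [this]
  simp

private theorem one_sub_mul_geom [CommRing α] (i m : ℕ) :
    (1 - (X : PowerSeries α) ^ i) * ∑ k ∈ range m, (X : PowerSeries α) ^ (k * i)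
      = 1 - X ^ (m * i) := by
  rw [sub_mul, one_mul, Finset.mul_sum]
  simp_rw [← pow_add]
  have : ∀ k, i + k * i = (k+1) * i := fun k => by ring
  simp_rw [this]
  rw [← Finset.sum_sub_distrib]
  have h2 : ∑ k ∈ range m, ((X:PowerSeries α)^(k*i) - X^((k+1)*i))
      = -((X:PowerSeries α)^(m*i) - X^(0*i)) := by
    rw [← Finset.sum_range_sub (fun k => (X:PowerSeries α)^(k*i)) m, ← Finset.sum_neg_distrib]
    simp [neg_sub]
  rw [h2]
  simp [neg_sub]


private theorem glaisher_gf_lhs (α : Type*) [Field α] (m n : ℕ) :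
    (#{p : n.Partition | ∀ j ∈ p.parts, ¬ m ∣ j} : α) =
      coeff n (∏ i ∈ (Ioc 0 n).filter (fun i => ¬ m ∣ i),
        (1 - (X : PowerSeries α) ^ i)⁻¹) := by
  have := partialGF_prop' α n ((Ioc 0 n).filter (fun i => ¬ m ∣ i))
    (fun i hi => (mem_Ioc.1 (mem_filter.1 hi).1).1) (fun _ => Set.univ) (fun _ _ => trivial)
  refine Eq.trans ?_ (this.trans ?_)
  · congr 2
    apply filter_congr
    intro p _
    simp only [Set.mem_univ, forall_const, true_and]
    constructor
    · intro h j hj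
      rw [mem_filter, mem_Ioc]
      refine ⟨⟨p.parts_pos hj, ?_⟩, h j hj⟩
      simpa [p.parts_sum] using Multiset.single_le_sum (fun _ _ => Nat.zero_le _) _ hj
    · intro h j hj
      exact (mem_filter.1 (h j hj)).2
  · congr 1
    apply prod_congr rfl
    intro i hi
    obtain ⟨hi1, -⟩ := mem_filter.1 hi
    obtain ⟨hi0, -⟩ := mem_Ioc.1 hi1
    obtain ⟨i, rfl⟩ := Nat.exists_eq_add_of_lt hi0
    rw [zero_add, num_series'']
    have hset : ((· * (i + 1)) '' Set.univ : Set ℕ) = {k | i + 1 ∣ k} := by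
      ext k
      simp only [Set.mem_image, Set.mem_univ, true_and, Set.mem_setOf_eq]
      constructor
      · rintro ⟨a, rfl⟩; exact Dvd.intro_left a rfl
      · rintro ⟨a, rfl⟩; exact ⟨a, mul_comm _ _⟩
    rw [hset]

private theorem glaisher_gf_rhs (α : Type*) [Field α] (m n : ℕ) (hm : 0 < m) :
    (#{p : n.Partition | ∀ j ∈ p.parts, p.parts.count j < m} : α) =
      coeff n (∏ i ∈ Ioc 0 n,
        (1 - (X : PowerSeries α) ^ (m * i)) * (1 - (X : PowerSeries α) ^ i)⁻¹) := by
  have := partialGF_prop' α n (Ioc 0 n)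
    (fun i hi => (mem_Ioc.1 hi).1) (fun _ => Set.Iio m) (fun _ _ => hm)
  refine Eq.trans ?_ (this.trans ?_)
  · congr 2
    apply filter_congr
    intro p _
    simp only [Set.mem_Iio]
    constructor
    · intro h
      constructor
      · intro j
        by_cases hj : j ∈ p.parts
        · exact h j hj
        · rw [Multiset.count_eq_zero_of_notMem hj]; exact hm
      · intro j hj
        rw [mem_Ioc]
        refine ⟨p.parts_pos hj, ?_⟩
        simpa [p.parts_sum] using Multiset.single_le_sum (fun _ _ => Nat.zero_le _) _ hj
    · rintro ⟨h1, -⟩ j hj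
      exact h1 j
  · congr 1
    apply prod_congr rfl
    intro i hi
    have hi0 : 0 < i := (mem_Ioc.1 hi).1
    rw [ind_geom _ _ hi0, PowerSeries.eq_mul_inv_iff_mul_eq, mul_comm, one_sub_mul_geom]
    simp [constantCoeff_X, zero_pow hi0.ne']

private theorem glaisher_same_coeff (α : Type*) [Field α] (m n : ℕ) (hm : 0 < m) :
    coeff n (∏ i ∈ Ioc 0 n,
        (1 - (X : PowerSeries α) ^ (m * i)) * (1 - (X : PowerSeries α) ^ i)⁻¹) =
      coeff n (∏ i ∈ (Ioc 0 n).filter (fun i => ¬ m ∣ i),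
        (1 - (X : PowerSeries α) ^ i)⁻¹) := by
  have hunit : ∀ i : ℕ, 0 < i → constantCoeff (R := α) (1 - X ^ i) ≠ 0 := by
    intro i hi
    simp [constantCoeff_X, zero_pow hi.ne']
  have key : (∏ i ∈ Ioc 0 n,
      (1 - (X : PowerSeries α) ^ (m * i)) * (1 - (X : PowerSeries α) ^ i)⁻¹) =
      (∏ i ∈ (Ioc 0 n).filter (fun i => ¬ m ∣ i), (1 - (X : PowerSeries α) ^ i)⁻¹) *
        ∏ i ∈ Ioc (n / m) n, (1 - (X : PowerSeries α) ^ (m * i)) := by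
    rw [prod_mul_distrib]
    -- split the inverse product by divisibility
    have hsplit : (∏ i ∈ Ioc 0 n, (1 - (X : PowerSeries α) ^ i)⁻¹) =
        (∏ i ∈ (Ioc 0 n).filter (fun i => ¬ m ∣ i), (1 - (X : PowerSeries α) ^ i)⁻¹) *
          ∏ j ∈ Ioc 0 (n / m), (1 - (X : PowerSeries α) ^ (m * j))⁻¹ := by
      rw [← prod_filter_mul_prod_filter_not (Ioc 0 n) (fun i => ¬ m ∣ i)]
      congr 1
      refine (prod_nbij' (fun j => m * j) (fun i => i / m) ?_ ?_ ?_ ?_ ?_).symm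
      · intro j hj
        obtain ⟨hj0, hj1⟩ := mem_Ioc.1 hj
        simp only [mem_filter, mem_Ioc, not_not]
        exact ⟨⟨Nat.mul_pos hm hj0, (Nat.le_div_iff_mul_le hm).1 hj1 |>.trans_eq' (mul_comm j m)⟩,
          Dvd.intro j rfl⟩
      · intro i hi
        simp only [mem_filter, mem_Ioc, not_not] at hi
        obtain ⟨⟨hi0, hi1⟩, hdvd⟩ := hi
        rw [mem_Ioc]
        exact ⟨Nat.div_pos (Nat.le_of_dvd hi0 hdvd) hm, Nat.div_le_div_right hi1⟩
      · intro j hj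
        exact Nat.mul_div_cancel_left j hm
      · intro i hi
        simp only [mem_filter, not_not] at hi
        exact Nat.mul_div_cancel' hi.2
      · intro j hj; rfl
    -- split the numerator product at n / m
    have hnum : (∏ i ∈ Ioc 0 n, (1 - (X : PowerSeries α) ^ (m * i))) =
        (∏ i ∈ Ioc 0 (n / m), (1 - (X : PowerSeries α) ^ (m * i))) *
          ∏ i ∈ Ioc (n / m) n, (1 - (X : PowerSeries α) ^ (m * i)) := by
      rw [prod_Ioc_consecutive _ (Nat.zero_le _) (Nat.div_le_self n m)]
    rw [hsplit, hnum]
    have hcancel : (∏ i ∈ Ioc 0 (n / m), (1 - (X : PowerSeries α) ^ (m * i))) *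
        (∏ j ∈ Ioc 0 (n / m), (1 - (X : PowerSeries α) ^ (m * j))⁻¹) = 1 := by
      rw [← prod_mul_distrib]
      apply prod_eq_one
      intro i hi
      exact PowerSeries.mul_inv_cancel _ (hunit _ (Nat.mul_pos hm (mem_Ioc.1 hi).1))
    calc (∏ i ∈ Ioc 0 (n / m), (1 - (X : PowerSeries α) ^ (m * i))) *
          (∏ i ∈ Ioc (n / m) n, (1 - (X : PowerSeries α) ^ (m * i))) *
          ((∏ i ∈ (Ioc 0 n).filter (fun i => ¬ m ∣ i), (1 - (X : PowerSeries α) ^ i)⁻¹) *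
            ∏ j ∈ Ioc 0 (n / m), (1 - (X : PowerSeries α) ^ (m * j))⁻¹)
        = ((∏ i ∈ Ioc 0 (n / m), (1 - (X : PowerSeries α) ^ (m * i))) *
            (∏ j ∈ Ioc 0 (n / m), (1 - (X : PowerSeries α) ^ (m * j))⁻¹)) *
          ((∏ i ∈ (Ioc 0 n).filter (fun i => ¬ m ∣ i), (1 - (X : PowerSeries α) ^ i)⁻¹) *
            ∏ i ∈ Ioc (n / m) n, (1 - (X : PowerSeries α) ^ (m * i))) := by ring
      _ = _ := by rw [hcancel, one_mul]
  rw [key]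
  apply coeff_mul_prod_one_sub_of_lt_order
  intro i hi
  rw [order_X_pow]
  obtain ⟨hi0, -⟩ := mem_Ioc.1 hi
  have : n < m * i := by
    calc n = m * (n / m) + n % m := (Nat.div_add_mod n m).symm
      _ < m * (n / m) + m := Nat.add_lt_add_left (Nat.mod_lt n hm) _
      _ = m * (n / m + 1) := by ring
      _ ≤ m * i := Nat.mul_le_mul le_rfl hi0
  exact_mod_cast this

end GlaisherAux

/-- Glaisher's identity: for all positive integers `m` and `n`, the number of partitions of
`n` into parts not divisible by `m` equals the number of partitions of `n` in which each
part appears fewer than `m` times. -/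
theorem glaisher_identity (m n : ℕ) (hm : 0 < m) (hn : 0 < n) :
    Fintype.card {π : n.Partition // ∀ j ∈ π.parts, ¬ m ∣ j} =
      Fintype.card {π : n.Partition // ∀ j ∈ π.parts, π.parts.count j < m} := by
  rw [Fintype.card_subtype, Fintype.card_subtype]
  have h1 := glaisher_gf_lhs ℚ m n
  have h2 := glaisher_gf_rhs ℚ m n hm
  have h3 := glaisher_same_coeff ℚ m n hm
  have : (#{p : n.Partition | ∀ j ∈ p.parts, ¬ m ∣ j} : ℚ) =
      (#{p : n.Partition | ∀ j ∈ p.parts, p.parts.count j < m} : ℚ) := by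
    rw [h1, h2, h3]
  exact_mod_cast this
end

section
/- For all positive integers m and n, the number of partitions of n into parts not divisible by m equals p(n) + \sum_{\pi \in D} (-1)^{n(\pi)} p(n - m|\pi|), where the sum ranges over all nonempty partitions \pi into distinct parts with m|\pi| \leq n, n(\pi) denotes the number of parts of \pi, and |\pi| denotes the sum of the parts of \pi. -/
open Multiset Finset

namespace PndAux



section helpers
variable {m : ℕ}

lemma map_div_mul (m : ℕ) (M : Multiset ℕ) :
    Multiset.map (fun a => a * m) (Multiset.map (fun a => a / m) (M.filter (fun j => m ∣ j)))
      = M.filter (fun j => m ∣ j) := by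
  rw [Multiset.map_map]
  conv_rhs => rw [← Multiset.map_id (M.filter (fun j => m ∣ j))]
  refine Multiset.map_congr rfl fun x hx => ?_
  simp only [Function.comp_apply, id]
  exact Nat.div_mul_cancel (Multiset.of_mem_filter hx)

lemma sum_map_mul (m : ℕ) (A : Multiset ℕ) :
    (Multiset.map (fun a => a * m) A).sum = A.sum * m := by
  induction A using Multiset.induction_on with
  | empty => simp
  | cons a s ih => simp [ih, add_mul]

lemma map_mul_div (hm : 0 < m) (A : Multiset ℕ) :
    Multiset.map (fun a => a / m) (Multiset.map (fun a => a * m) A) = A := by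
  rw [Multiset.map_map]
  conv_rhs => rw [← Multiset.map_id A]
  refine Multiset.map_congr rfl fun x _ => ?_
  simp only [Function.comp_apply, id]
  exact Nat.mul_div_cancel x hm

end helpers




lemma parts_inj {u : ℕ} : Function.Injective (fun π : Nat.Partition u => π.parts) :=
  fun _ _ h => Nat.Partition.ext h

/-- All partitions of `u`, as multisets. -/
def Pfin (u : ℕ) : Finset (Multiset ℕ) :=
  Finset.image (fun π : Nat.Partition u => π.parts) Finset.univ

/-- Partitions of `u` with no part divisible by `m`, as multisets. -/
def Qfin (m u : ℕ) : Finset (Multiset ℕ) :=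
  Finset.image (fun π : Nat.Partition u => π.parts)
    ((Finset.univ : Finset (Nat.Partition u)).filter fun π => ∀ j ∈ π.parts, ¬ m ∣ j)

/-- Distinct partitions of `u`, as multisets. -/
def Dfin (u : ℕ) : Finset (Multiset ℕ) :=
  Finset.image (fun π : Nat.Partition u => π.parts) (Nat.Partition.distincts u)

lemma mem_Pfin {u : ℕ} {M : Multiset ℕ} :
    M ∈ Pfin u ↔ M.sum = u ∧ ∀ i ∈ M, 0 < i := by
  constructor
  · rintro hM
    obtain ⟨π, -, rfl⟩ := Finset.mem_image.1 hM
    exact ⟨π.parts_sum, fun i hi => π.parts_pos hi⟩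
  · rintro ⟨h1, h2⟩
    exact Finset.mem_image.2 ⟨⟨M, fun {i} hi => h2 i hi, h1⟩, Finset.mem_univ _, rfl⟩

lemma mem_Qfin {m u : ℕ} {M : Multiset ℕ} :
    M ∈ Qfin m u ↔ M.sum = u ∧ (∀ i ∈ M, 0 < i) ∧ ∀ j ∈ M, ¬ m ∣ j := by
  constructor
  · rintro hM
    obtain ⟨π, hπ, rfl⟩ := Finset.mem_image.1 hM
    exact ⟨π.parts_sum, fun i hi => π.parts_pos hi, (Finset.mem_filter.1 hπ).2⟩
  · rintro ⟨h1, h2, h3⟩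
    exact Finset.mem_image.2 ⟨⟨M, fun {i} hi => h2 i hi, h1⟩,
      Finset.mem_filter.2 ⟨Finset.mem_univ _, h3⟩, rfl⟩

lemma mem_Dfin {u : ℕ} {M : Multiset ℕ} :
    M ∈ Dfin u ↔ M.sum = u ∧ (∀ i ∈ M, 0 < i) ∧ M.Nodup := by
  constructor
  · rintro hM
    obtain ⟨π, hπ, rfl⟩ := Finset.mem_image.1 hM
    exact ⟨π.parts_sum, fun i hi => π.parts_pos hi,
      (Finset.mem_filter.1 hπ).2⟩
  · rintro ⟨h1, h2, h3⟩
    exact Finset.mem_image.2 ⟨⟨M, fun {i} hi => h2 i hi, h1⟩,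
      Finset.mem_filter.2 ⟨Finset.mem_univ _, h3⟩, rfl⟩

lemma card_Pfin (u : ℕ) : (Pfin u).card = Fintype.card (Nat.Partition u) := by
  rw [Pfin, Finset.card_image_of_injective _ parts_inj, Finset.card_univ]

lemma card_Qfin (m u : ℕ) :
    (Qfin m u).card = Fintype.card {π : Nat.Partition u // ∀ j ∈ π.parts, ¬ m ∣ j} := by
  rw [Qfin, Finset.card_image_of_injective _ parts_inj, Fintype.card_subtype]

lemma sum_Dfin (u : ℕ) (f : Multiset ℕ → ℤ) :
    ∑ A ∈ Dfin u, f A = ∑ π ∈ Nat.Partition.distincts u, f π.parts := by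
  rw [Dfin, Finset.sum_image fun a _ b _ h => parts_inj h]

lemma sup_mem : ∀ {s : Multiset ℕ}, s ≠ 0 → s.sup ∈ s := by
  intro s
  induction s using Multiset.induction_on with
  | empty => intro h; exact absurd rfl h
  | cons a s ih =>
    intro _
    rw [Multiset.sup_cons]
    by_cases hs : s = 0
    · subst hs; simp
    · rcases le_total a s.sup with h | h
      · rw [sup_eq_right.mpr h]; exact Multiset.mem_cons_of_mem (ih hs)
      · rw [sup_eq_left.mpr h]; exact Multiset.mem_cons_self a s


/-- Pairs (A, B) with A a distinct partition, B a partition, total sum u. -/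
def PPfin (u : ℕ) : Finset (Multiset ℕ × Multiset ℕ) :=
  (((Finset.range (u+1)).biUnion Dfin) ×ˢ ((Finset.range (u+1)).biUnion Pfin)).filter
    (fun p => p.1.sum + p.2.sum = u)

lemma mem_PPfin {u : ℕ} {p : Multiset ℕ × Multiset ℕ} :
    p ∈ PPfin u ↔ p.1.Nodup ∧ (∀ i ∈ p.1, 0 < i) ∧ (∀ i ∈ p.2, 0 < i) ∧
      p.1.sum + p.2.sum = u := by
  constructor
  · intro hp
    obtain ⟨hmem, hsum⟩ := Finset.mem_filter.1 hp
    obtain ⟨h1, h2⟩ := Finset.mem_product.1 hmem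
    obtain ⟨s1, hs1, hA⟩ := Finset.mem_biUnion.1 h1
    obtain ⟨s2, hs2, hB⟩ := Finset.mem_biUnion.1 h2
    obtain ⟨hsA, hApos, hAnd⟩ := mem_Dfin.1 hA
    obtain ⟨hsB, hBpos⟩ := mem_Pfin.1 hB
    exact ⟨hAnd, hApos, hBpos, hsum⟩
  · rintro ⟨h1, h2, h3, h4⟩
    refine Finset.mem_filter.2 ⟨Finset.mem_product.2 ⟨?_, ?_⟩, h4⟩
    · exact Finset.mem_biUnion.2 ⟨p.1.sum, Finset.mem_range.2 (by omega),
        mem_Dfin.2 ⟨rfl, h2, h1⟩⟩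
    · exact Finset.mem_biUnion.2 ⟨p.2.sum, Finset.mem_range.2 (by omega),
        mem_Pfin.2 ⟨rfl, h3⟩⟩

lemma mem_PPfin' {u : ℕ} {A B : Multiset ℕ} :
    (A, B) ∈ PPfin u ↔ A.Nodup ∧ (∀ i ∈ A, 0 < i) ∧ (∀ i ∈ B, 0 < i) ∧
      A.sum + B.sum = u := mem_PPfin

/-- The sign-reversing involution. -/
def flip (p : Multiset ℕ × Multiset ℕ) : Multiset ℕ × Multiset ℕ :=
  if p.1.sup < p.2.sup then (p.2.sup ::ₘ p.1, p.2.erase p.2.sup)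
  else (p.1.erase p.1.sup, p.1.sup ::ₘ p.2)

lemma flip_spec {u : ℕ} (hu : 0 < u) {p : Multiset ℕ × Multiset ℕ}
    (hp : p ∈ PPfin u) :
    flip p ∈ PPfin u ∧ flip (flip p) = p ∧
      (-1 : ℤ) ^ (Multiset.card p.1) + (-1 : ℤ) ^ (Multiset.card (flip p).1) = 0 := by
  obtain ⟨A, B⟩ := p
  obtain ⟨hnd, hApos, hBpos, hsum⟩ := mem_PPfin'.1 hp
  by_cases h : A.sup < B.sup
  · -- move b = B.sup from B to A
    set b := B.sup with hb
    have hBne : B ≠ 0 := by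
      rintro rfl
      simp [hb] at h
    have hbB : b ∈ B := sup_mem hBne
    have hbpos : 0 < b := hBpos b hbB
    have hbA : b ∉ A := fun hmem => absurd (Multiset.le_sup hmem) (by omega)
    have hflip : flip (A, B) = (b ::ₘ A, B.erase b) := by
      simp only [flip]; exact if_pos h
    have hsumB : b + (B.erase b).sum = B.sum := by
      rw [← Multiset.sum_cons, Multiset.cons_erase hbB]
    have hmem2 : flip (A, B) ∈ PPfin u := by
      rw [hflip]
      refine mem_PPfin'.2 ⟨?_, ?_, ?_, ?_⟩
      · exact Multiset.nodup_cons.2 ⟨hbA, hnd⟩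
      · intro i hi
        rcases Multiset.mem_cons.1 hi with rfl | hi
        · exact hbpos
        · exact hApos i hi
      · exact fun i hi => hBpos i (Multiset.mem_of_mem_erase hi)
      · simp only [Multiset.sum_cons]
        omega
    refine ⟨hmem2, ?_, ?_⟩
    · rw [hflip]
      have hsup1 : (b ::ₘ A).sup = b := by
        rw [Multiset.sup_cons, sup_eq_left.mpr (le_of_lt h)]
      have hsup2 : (B.erase b).sup ≤ b :=
        Multiset.sup_le.2 fun x hx => Multiset.le_sup (Multiset.mem_of_mem_erase hx)
      have hcond : ¬ (b ::ₘ A).sup < (B.erase b).sup := by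
        rw [hsup1]; omega
      simp only [flip, hsup1, Multiset.erase_cons_head, Multiset.cons_erase hbB]
      rw [if_neg (by omega)]
    · rw [hflip]
      simp only [Multiset.card_cons, pow_succ]
      ring
  · -- move a = A.sup from A to B
    set a := A.sup with ha
    have hAne : A ≠ 0 := by
      rintro rfl
      have hB0 : B.sup = 0 := by
        have h2 := not_lt.1 h
        simpa [ha] using h2
      have hB : B = 0 := by
        by_contra hB
        have h3 := hBpos _ (sup_mem hB)
        have h4 := Multiset.le_sup (sup_mem hB)
        omega
      subst hB
      simp at hsum
      omega
    have haA : a ∈ A := sup_mem hAne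
    have hapos : 0 < a := hApos a haA
    have hflip : flip (A, B) = (A.erase a, a ::ₘ B) := by
      simp only [flip]; exact if_neg h
    have hsumA : a + (A.erase a).sum = A.sum := by
      rw [← Multiset.sum_cons, Multiset.cons_erase haA]
    have hmem2 : flip (A, B) ∈ PPfin u := by
      rw [hflip]
      refine mem_PPfin'.2 ⟨Multiset.Nodup.erase _ hnd,
        fun i hi => hApos i (Multiset.mem_of_mem_erase hi), ?_, ?_⟩
      · intro i hi
        rcases Multiset.mem_cons.1 hi with rfl | hi
        · exact hapos
        · exact hBpos i hi
      · simp only [Multiset.sum_cons]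
        omega
    refine ⟨hmem2, ?_, ?_⟩
    · rw [hflip]
      have hBa : B.sup ≤ a := not_lt.1 h
      have hsup1 : (a ::ₘ B).sup = a := by
        rw [Multiset.sup_cons, sup_eq_left.mpr hBa]
      have hsup2 : (A.erase a).sup < a := by
        by_cases he : A.erase a = 0
        · rw [he, Multiset.sup_zero]; exact hapos
        · have h1 : (A.erase a).sup ≤ a :=
            Multiset.sup_le.2 fun x hx => Multiset.le_sup (Multiset.mem_of_mem_erase hx)
          have h2 : (A.erase a).sup ≠ a := by
            intro hcontra
            exact hnd.notMem_erase (hcontra ▸ sup_mem he)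
          omega
      have hcond : (A.erase a).sup < (a ::ₘ B).sup := by rw [hsup1]; exact hsup2
      simp only [flip, hsup1, Multiset.erase_cons_head, Multiset.cons_erase haA]
      rw [if_pos hsup2]
    · rw [hflip]
      have hc : Multiset.card A = Multiset.card (A.erase a) + 1 := by
        conv_lhs => rw [← Multiset.cons_erase haA]
        rw [Multiset.card_cons]
      simp only [hc, pow_succ]
      ring

lemma flip_ne {u : ℕ} (hu : 0 < u) {p : Multiset ℕ × Multiset ℕ}
    (hp : p ∈ PPfin u) : flip p ≠ p := by
  intro hcontra
  have := (flip_spec hu hp).2.2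
  rw [hcontra] at this
  have h2 : (-1 : ℤ) ^ (Multiset.card p.1) = 0 := by linarith
  exact pow_ne_zero _ (by norm_num) h2

lemma sum_PPfin_zero {u : ℕ} (hu : 0 < u) :
    ∑ p ∈ PPfin u, (-1 : ℤ) ^ (Multiset.card p.1) = 0 := by
  apply Finset.sum_involution (fun p _ => flip p)
  · intro p hp
    exact (flip_spec hu hp).2.2
  · intro p hp _
    exact flip_ne hu hp
  · intro p hp
    exact (flip_spec hu hp).1
  · intro p hp
    exact (flip_spec hu hp).2.1



lemma sumB {u : ℕ} (hu : 0 < u) :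
    ∑ s ∈ Finset.range (u + 1),
      (∑ A ∈ Dfin s, (-1 : ℤ) ^ (Multiset.card A)) * ((Pfin (u - s)).card : ℤ) = 0 := by
  have step1 : ∀ s : ℕ,
      (∑ A ∈ Dfin s, (-1 : ℤ) ^ (Multiset.card A)) * ((Pfin (u - s)).card : ℤ)
      = ∑ A ∈ Dfin s, ∑ _B ∈ Pfin (u - s), (-1 : ℤ) ^ (Multiset.card A) := by
    intro s
    rw [Finset.sum_mul]
    refine Finset.sum_congr rfl fun A _ => ?_
    rw [Finset.sum_const, nsmul_eq_mul, mul_comm]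
  simp only [step1]
  have step2 :
      ∑ s ∈ Finset.range (u + 1), ∑ A ∈ Dfin s, ∑ _B ∈ Pfin (u - s),
        (-1 : ℤ) ^ (Multiset.card A)
      = ∑ x ∈ (Finset.range (u + 1)).sigma (fun s => Dfin s ×ˢ Pfin (u - s)),
        (-1 : ℤ) ^ (Multiset.card x.2.1) := by
    rw [Finset.sum_sigma]
    refine Finset.sum_congr rfl fun s _ => ?_
    rw [Finset.sum_product]
  rw [step2]
  have step3 :
      ∑ x ∈ (Finset.range (u + 1)).sigma (fun s => Dfin s ×ˢ Pfin (u - s)),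
        (-1 : ℤ) ^ (Multiset.card x.2.1)
      = ∑ p ∈ PPfin u, (-1 : ℤ) ^ (Multiset.card p.1) := by
    refine Finset.sum_nbij' (fun x => x.2) (fun p => ⟨p.1.sum, p⟩) ?_ ?_ ?_ ?_ ?_
    · rintro ⟨s, A, B⟩ hx
      obtain ⟨hs, hAB⟩ := Finset.mem_sigma.1 hx
      obtain ⟨hA, hB⟩ := Finset.mem_product.1 hAB
      obtain ⟨hAsum, hApos, hAnd⟩ := mem_Dfin.1 hA
      obtain ⟨hBsum, hBpos⟩ := mem_Pfin.1 hB
      have hs' : s < u + 1 := Finset.mem_range.1 hs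
      have hAs : A.sum = s := hAsum
      have hBs : B.sum = u - s := hBsum
      exact mem_PPfin'.2 ⟨hAnd, hApos, hBpos, by omega⟩
    · rintro ⟨A, B⟩ hp
      obtain ⟨hnd, hApos, hBpos, hsum⟩ := mem_PPfin'.1 hp
      refine Finset.mem_sigma.2 ⟨Finset.mem_range.2 ?_, ?_⟩
      · show A.sum < u + 1
        omega
      · show (A, B) ∈ Dfin A.sum ×ˢ Pfin (u - A.sum)
        exact Finset.mem_product.2 ⟨mem_Dfin.2 ⟨rfl, hApos, hnd⟩,
          mem_Pfin.2 ⟨(by omega : B.sum = u - A.sum), hBpos⟩⟩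
    · rintro ⟨s, A, B⟩ hx
      obtain ⟨hs, hAB⟩ := Finset.mem_sigma.1 hx
      obtain ⟨hA, hB⟩ := Finset.mem_product.1 hAB
      obtain ⟨hAsum, -, -⟩ := mem_Dfin.1 hA
      show (⟨A.sum, (A, B)⟩ : Σ _ : ℕ, Multiset ℕ × Multiset ℕ) = ⟨s, (A, B)⟩
      exact congrArg (fun z => (⟨z, (A, B)⟩ : Σ _ : ℕ, Multiset ℕ × Multiset ℕ)) hAsum
    · rintro ⟨A, B⟩ _
      rfl
    · rintro ⟨s, A, B⟩ _
      rfl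
  rw [step3]
  exact sum_PPfin_zero hu

lemma cardA (m : ℕ) (hm : 0 < m) (N : ℕ) :
    (Pfin N).card = ∑ t ∈ Finset.range (N / m + 1),
      (Pfin t).card * (Qfin m (N - m * t)).card := by
  have hcard : ∑ t ∈ Finset.range (N / m + 1), (Pfin t).card * (Qfin m (N - m * t)).card
      = ((Finset.range (N / m + 1)).sigma fun t => Pfin t ×ˢ Qfin m (N - m * t)).card := by
    rw [Finset.card_sigma]
    exact Finset.sum_congr rfl fun t _ => (Finset.card_product _ _).symm
  rw [hcard]
  refine Finset.card_bij'
    (fun M _ => (⟨(Multiset.map (fun a => a / m) (M.filter (fun j => m ∣ j))).sum,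
      (Multiset.map (fun a => a / m) (M.filter (fun j => m ∣ j)),
        M.filter (fun j => ¬ m ∣ j))⟩ : Σ _ : ℕ, Multiset ℕ × Multiset ℕ))
    (fun x _ => Multiset.map (fun a => a * m) x.2.1 + x.2.2) ?_ ?_ ?_ ?_
  · -- forward membership
    intro M hM
    obtain ⟨hMsum, hMpos⟩ := mem_Pfin.1 hM
    have hDA := map_div_mul m M
    have hAsum : (Multiset.map (fun a => a / m) (M.filter (fun j => m ∣ j))).sum * m
        = (M.filter (fun j => m ∣ j)).sum := by
      rw [← sum_map_mul, hDA]
    have hsplit : (M.filter (fun j => m ∣ j)).sum + (M.filter (fun j => ¬ m ∣ j)).sum = N := by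
      rw [← Multiset.sum_add, Multiset.filter_add_not]; exact hMsum
    simp only [Finset.mem_sigma, Finset.mem_product, Finset.mem_range]
    refine ⟨?_, ?_, ?_⟩
    · have : (Multiset.map (fun a => a / m) (M.filter (fun j => m ∣ j))).sum ≤ N / m :=
        (Nat.le_div_iff_mul_le hm).2 (by omega)
      omega
    · refine mem_Pfin.2 ⟨rfl, ?_⟩
      intro x hx
      obtain ⟨y, hy, rfl⟩ := Multiset.mem_map.1 hx
      exact Nat.div_pos (Nat.le_of_dvd (hMpos y (Multiset.mem_of_mem_filter hy))
        (Multiset.of_mem_filter hy)) hm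
    · refine mem_Qfin.2 ⟨?_, fun i hi => hMpos i (Multiset.mem_of_mem_filter hi),
        fun j hj => by exact Multiset.of_mem_filter (p := fun j => ¬ m ∣ j) hj⟩
      have hma : m * (Multiset.map (fun a => a / m) (M.filter (fun j => m ∣ j))).sum
          = (M.filter (fun j => m ∣ j)).sum := by rw [mul_comm]; exact hAsum
      omega
  · -- backward membership
    rintro ⟨t, A, B⟩ hx
    dsimp only
    simp only [Finset.mem_sigma, Finset.mem_product, Finset.mem_range] at hx
    obtain ⟨ht, hA, hB⟩ := hx
    obtain ⟨hAsum, hApos⟩ := mem_Pfin.1 hA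
    obtain ⟨hBsum, hBpos, hBnd⟩ := mem_Qfin.1 hB
    refine mem_Pfin.2 ⟨?_, ?_⟩
    · rw [Multiset.sum_add, sum_map_mul, hAsum, hBsum]
      have h1 : t * m ≤ N :=
        (Nat.le_div_iff_mul_le hm).1 (Nat.lt_succ_iff.1 ht)
      have h2 : m * t = t * m := mul_comm m t
      omega
    · intro i hi
      rcases Multiset.mem_add.1 hi with hi | hi
      · obtain ⟨a, ha, rfl⟩ := Multiset.mem_map.1 hi
        exact Nat.mul_pos (hApos a ha) hm
      · exact hBpos i hi
  · -- left inverse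
    intro M hM
    simp only
    rw [map_div_mul, Multiset.filter_add_not]
  · -- right inverse
    rintro ⟨t, A, B⟩ hx
    dsimp only
    simp only [Finset.mem_sigma, Finset.mem_product, Finset.mem_range] at hx
    obtain ⟨ht, hA, hB⟩ := hx
    obtain ⟨hAsum, hApos⟩ := mem_Pfin.1 hA
    obtain ⟨hBsum, hBpos, hBnd⟩ := mem_Qfin.1 hB
    have hmapdvd : ∀ x ∈ Multiset.map (fun a => a * m) A, m ∣ x := by
      intro x hx'
      obtain ⟨a, ha, rfl⟩ := Multiset.mem_map.1 hx'
      exact ⟨a, mul_comm a m⟩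
    have h1 : (Multiset.map (fun a => a * m) A + B).filter (fun j => m ∣ j)
        = Multiset.map (fun a => a * m) A := by
      rw [Multiset.filter_add, Multiset.filter_eq_self.mpr hmapdvd,
        Multiset.filter_eq_nil.mpr hBnd, add_zero]
    have h2 : (Multiset.map (fun a => a * m) A + B).filter (fun j => ¬ m ∣ j) = B := by
      rw [Multiset.filter_add,
        Multiset.filter_eq_nil.mpr (fun x hx' => not_not_intro (hmapdvd x hx')),
        Multiset.filter_eq_self.mpr hBnd, zero_add]
    simp only [h1, h2, map_mul_div hm]
    rw [hAsum]


lemma Dfin0 : Dfin 0 = {0} := by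
  ext M
  simp only [mem_Dfin, Finset.mem_singleton]
  constructor
  · rintro ⟨h1, h2, -⟩
    exact Multiset.eq_zero_of_forall_notMem fun x hx =>
      absurd (Multiset.sum_eq_zero_iff.1 h1 x hx) (h2 x hx).ne'
  · rintro rfl; simp

lemma Pfin0 : Pfin 0 = {0} := by
  ext M
  simp only [mem_Pfin, Finset.mem_singleton]
  constructor
  · rintro ⟨h1, h2⟩
    exact Multiset.eq_zero_of_forall_notMem fun x hx =>
      absurd (Multiset.sum_eq_zero_iff.1 h1 x hx) (h2 x hx).ne'
  · rintro rfl; simp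

lemma sumB' (u : ℕ) :
    ∑ s ∈ Finset.range (u + 1),
      (∑ A ∈ Dfin s, (-1 : ℤ) ^ (Multiset.card A)) * ((Pfin (u - s)).card : ℤ)
      = if u = 0 then 1 else 0 := by
  rcases Nat.eq_zero_or_pos u with rfl | hu
  · simp [Dfin0, Pfin0]
  · rw [if_neg hu.ne', sumB hu]

theorem main (m n : ℕ) (hm : 0 < m) (hn : 0 < n) :
    (Fintype.card {π : n.Partition // ∀ j ∈ π.parts, ¬ m ∣ j} : ℤ) =
      (Fintype.card n.Partition : ℤ) +
        ∑ t ∈ Finset.Icc 1 (n / m), ∑ π ∈ Nat.Partition.distincts t,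
          (-1 : ℤ) ^ (Multiset.card π.parts) *
            (Fintype.card (Nat.Partition (n - m * t)) : ℤ) := by
  classical
  rw [← card_Qfin]
  simp only [← card_Pfin]
  -- rewrite the inner sums in terms of Dfin
  have hinner : ∀ t : ℕ,
      ∑ π ∈ Nat.Partition.distincts t, (-1 : ℤ) ^ (Multiset.card π.parts) *
        ((Pfin (n - m * t)).card : ℤ)
      = (∑ A ∈ Dfin t, (-1 : ℤ) ^ (Multiset.card A)) * ((Pfin (n - m * t)).card : ℤ) := by
    intro t
    rw [Finset.sum_mul, sum_Dfin t (fun A => (-1 : ℤ) ^ (Multiset.card A) * ((Pfin (n - m * t)).card : ℤ))]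
  simp only [hinner]
  -- absorb the p(n) term as the t = 0 term
  have hins : ∀ k : ℕ, Finset.range (k + 1) = insert 0 (Finset.Icc 1 k) := by
    intro k
    ext x
    simp only [Finset.mem_range, Finset.mem_insert, Finset.mem_Icc, Nat.lt_succ_iff]
    omega
  have hzero : (∑ A ∈ Dfin 0, (-1 : ℤ) ^ (Multiset.card A)) *
      ((Pfin (n - m * 0)).card : ℤ) = ((Pfin n).card : ℤ) := by
    simp [Dfin0]
  rw [show ((Pfin n).card : ℤ) +
      ∑ t ∈ Finset.Icc 1 (n / m), (∑ A ∈ Dfin t, (-1 : ℤ) ^ (Multiset.card A)) *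
        ((Pfin (n - m * t)).card : ℤ)
      = ∑ t ∈ Finset.range (n / m + 1), (∑ A ∈ Dfin t, (-1 : ℤ) ^ (Multiset.card A)) *
        ((Pfin (n - m * t)).card : ℤ) by
    rw [hins (n / m), Finset.sum_insert (by simp), hzero]]
  -- main computation
  symm
  calc
    ∑ t ∈ Finset.range (n / m + 1), (∑ A ∈ Dfin t, (-1 : ℤ) ^ (Multiset.card A)) *
        ((Pfin (n - m * t)).card : ℤ)
      = ∑ t ∈ Finset.range (n / m + 1), ∑ s ∈ Finset.range ((n - m * t) / m + 1),
          (∑ A ∈ Dfin t, (-1 : ℤ) ^ (Multiset.card A)) *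
            (((Pfin s).card : ℤ) * ((Qfin m (n - m * t - m * s)).card : ℤ)) := by
        refine Finset.sum_congr rfl fun t _ => ?_
        rw [cardA m hm (n - m * t)]
        push_cast
        rw [Finset.mul_sum]
    _ = ∑ x ∈ (Finset.range (n / m + 1)).sigma
          (fun t => Finset.range ((n - m * t) / m + 1)),
          (∑ A ∈ Dfin x.1, (-1 : ℤ) ^ (Multiset.card A)) *
            (((Pfin x.2).card : ℤ) * ((Qfin m (n - m * x.1 - m * x.2)).card : ℤ)) := by
        rw [Finset.sum_sigma]
    _ = ∑ x ∈ (Finset.range (n / m + 1)).sigma (fun u => Finset.range (u + 1)),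
          (∑ A ∈ Dfin x.2, (-1 : ℤ) ^ (Multiset.card A)) *
            (((Pfin (x.1 - x.2)).card : ℤ) * ((Qfin m (n - m * x.1)).card : ℤ)) := by
        refine Finset.sum_nbij' (fun x => ⟨x.1 + x.2, x.1⟩) (fun x => ⟨x.2, x.1 - x.2⟩)
          ?_ ?_ ?_ ?_ ?_
        · rintro ⟨t, s⟩ hx
          simp only [Finset.mem_sigma, Finset.mem_range, Nat.lt_succ_iff] at hx
          obtain ⟨h1, h2⟩ := hx
          have m1 : t * m ≤ n := (Nat.le_div_iff_mul_le hm).1 h1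
          have m2 : s * m ≤ n - m * t := (Nat.le_div_iff_mul_le hm).1 h2
          have hc : m * t = t * m := mul_comm m t
          have hadd : (t + s) * m = t * m + s * m := add_mul t s m
          refine Finset.mem_sigma.2 ⟨Finset.mem_range.2 ?_, Finset.mem_range.2 ?_⟩
          · show t + s < n / m + 1
            have : t + s ≤ n / m := (Nat.le_div_iff_mul_le hm).2 (by omega)
            omega
          · show t < t + s + 1
            omega
        · rintro ⟨u, t⟩ hx
          simp only [Finset.mem_sigma, Finset.mem_range, Nat.lt_succ_iff] at hx
          obtain ⟨h1, h2⟩ := hx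
          have m1 : u * m ≤ n := (Nat.le_div_iff_mul_le hm).1 h1
          have hsub : (u - t) * m = u * m - t * m := Nat.sub_mul u t m
          have hc : m * t = t * m := mul_comm m t
          refine Finset.mem_sigma.2 ⟨Finset.mem_range.2 ?_, Finset.mem_range.2 ?_⟩
          · show t < n / m + 1
            omega
          · show u - t < (n - m * t) / m + 1
            have : u - t ≤ (n - m * t) / m := (Nat.le_div_iff_mul_le hm).2 (by omega)
            omega
        · rintro ⟨t, s⟩ _
          show (⟨t, t + s - t⟩ : Σ _ : ℕ, ℕ) = ⟨t, s⟩
          exact congrArg (Sigma.mk t) (by omega)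
        · rintro ⟨u, t⟩ hx
          simp only [Finset.mem_sigma, Finset.mem_range, Nat.lt_succ_iff] at hx
          have h3 : t + (u - t) = u := by omega
          show (⟨t + (u - t), t⟩ : Σ _ : ℕ, ℕ) = ⟨u, t⟩
          exact congrArg (fun z => (⟨z, t⟩ : Σ _ : ℕ, ℕ)) h3
        · rintro ⟨t, s⟩ _
          show (∑ A ∈ Dfin t, (-1 : ℤ) ^ (Multiset.card A)) *
              (((Pfin s).card : ℤ) * ((Qfin m (n - m * t - m * s)).card : ℤ))
            = (∑ A ∈ Dfin t, (-1 : ℤ) ^ (Multiset.card A)) *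
              (((Pfin (t + s - t)).card : ℤ) * ((Qfin m (n - m * (t + s))).card : ℤ))
          have h1 : t + s - t = s := by omega
          have h2 : n - m * t - m * s = n - m * (t + s) := by
            rw [Nat.mul_add, Nat.sub_sub]
          rw [h1, h2]
    _ = ∑ u ∈ Finset.range (n / m + 1), ∑ t ∈ Finset.range (u + 1),
          (∑ A ∈ Dfin t, (-1 : ℤ) ^ (Multiset.card A)) *
            (((Pfin (u - t)).card : ℤ) * ((Qfin m (n - m * u)).card : ℤ)) := by
        rw [Finset.sum_sigma]
    _ = ∑ u ∈ Finset.range (n / m + 1),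
          (if u = 0 then (1 : ℤ) else 0) * ((Qfin m (n - m * u)).card : ℤ) := by
        refine Finset.sum_congr rfl fun u _ => ?_
        rw [← sumB' u, Finset.sum_mul]
        refine Finset.sum_congr rfl fun t _ => ?_
        ring
    _ = ((Qfin m n).card : ℤ) := by
        rw [Finset.sum_eq_single 0]
        · simp
        · intro b _ hb
          simp [hb]
        · intro h
          simp at h



end PndAux


/-- For all positive integers `m` and `n`, the number of partitions of `n` into parts not
divisible by `m` equals `p(n) + ∑_{π ∈ D, m|π| ≤ n} (-1)^{n(π)} p(n - m|π|)`, where the sum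
ranges over nonempty partitions `π` into distinct parts with `m|π| ≤ n`; such partitions are
exactly the distinct partitions of the numbers `t` with `1 ≤ t` and `m * t ≤ n`,
i.e. `t ∈ [1, n / m]`. -/
theorem partitions_not_div_eq_distinct_sum (m n : ℕ) (hm : 0 < m) (hn : 0 < n) :
    (Fintype.card {π : n.Partition // ∀ j ∈ π.parts, ¬ m ∣ j} : ℤ) =
      (Fintype.card n.Partition : ℤ) +
        ∑ t ∈ Finset.Icc 1 (n / m), ∑ π ∈ Nat.Partition.distincts t,
          (-1 : ℤ) ^ (Multiset.card π.parts) *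
            (Fintype.card (Nat.Partition (n - m * t)) : ℤ) := by
  exact PndAux.main m n hm hn
end

section
/- For all positive integers m and n, the number of partitions of n in which each part appears fewer than m times equals p(n) + \sum_{\pi \in D} (-1)^{n(\pi)} p(n - m|\pi|), where the sum ranges over all nonempty partitions \pi into distinct parts with m|\pi| \leq n, n(\pi) denotes the number of parts of \pi, and |\pi| denotes the sum of the parts of \pi. -/
open Finset Multiset Nat

namespace PartitionRepeatAux

/-- The set of "bad" parts of a partition: those appearing at least `m` times. -/
def badset (m : ℕ) {n : ℕ} (π : n.Partition) : Finset ℕ :=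
  π.parts.toFinset.filter fun j => m ≤ π.parts.count j

lemma smul_le {m n : ℕ} {π : n.Partition} {T : Finset ℕ} (hT : T ⊆ badset m π) :
    m • T.val ≤ π.parts := by
  rw [Multiset.le_iff_count]
  intro a
  rw [Multiset.count_nsmul]
  by_cases ha : a ∈ T
  · have h2 := hT ha
    simp only [badset, Finset.mem_filter, Multiset.mem_toFinset] at h2
    have h1 : T.val.count a = 1 := Multiset.count_eq_one_of_mem T.nodup ha
    rw [h1, mul_one]
    exact h2.2
  · have h1 : T.val.count a = 0 := by
      rwa [Multiset.count_eq_zero, ← Finset.mem_def]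
    simp [h1]

lemma sum_nsmul' (m : ℕ) (s : Multiset ℕ) : (m • s).sum = m * s.sum := by
  induction m with
  | zero => simp
  | succ k ih => rw [succ_nsmul, Multiset.sum_add, ih, succ_mul]

/-- Forward map: from (partition of n, subset of bad parts) to
(t, distinct partition of t, partition of n - m*t). -/
def fwd (m n : ℕ) (π : n.Partition) (T : Finset ℕ) (hT : T ⊆ badset m π) :
    Σ t : ℕ, t.Partition × (n - m * t).Partition :=
  ⟨T.val.sum,
    (⟨T.val, fun {i} hi => π.parts_pos (by
        have h0 : i ∈ π.parts.toFinset := (Finset.filter_subset _ _) (hT hi)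
        exact Multiset.mem_toFinset.1 h0), rfl⟩,
     ⟨π.parts - m • T.val,
      fun hi => π.parts_pos (Multiset.mem_of_le (tsub_le_self) hi),
      by
        have h1 : m • T.val ≤ π.parts := smul_le hT
        have h2 : (π.parts - m • T.val).sum + (m • T.val).sum = n := by
          rw [← Multiset.sum_add, tsub_add_cancel_of_le h1, π.parts_sum]
        rw [sum_nsmul'] at h2
        omega⟩)⟩

@[simp] lemma fwd_fst {m n : ℕ} (π : n.Partition) (T : Finset ℕ) (hT : T ⊆ badset m π) :
    (fwd m n π T hT).1 = T.val.sum := rfl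

@[simp] lemma fwd_parts₁ {m n : ℕ} (π : n.Partition) (T : Finset ℕ) (hT : T ⊆ badset m π) :
    (fwd m n π T hT).2.1.parts = T.val := rfl

@[simp] lemma fwd_parts₂ {m n : ℕ} (π : n.Partition) (T : Finset ℕ) (hT : T ⊆ badset m π) :
    (fwd m n π T hT).2.2.parts = π.parts - m • T.val := rfl

/-- Backward map. -/
def bwd (m n t : ℕ) (π : t.Partition) (μ : (n - m * t).Partition) (h : m * t ≤ n) :
    Σ _ : n.Partition, Finset ℕ :=
  ⟨⟨μ.parts + m • π.parts,
    fun hi => by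
      rcases Multiset.mem_add.1 hi with h' | h'
      · exact μ.parts_pos h'
      · exact π.parts_pos (Multiset.mem_of_mem_nsmul h'),
    by rw [Multiset.sum_add, sum_nsmul', μ.parts_sum, π.parts_sum]; omega⟩,
   π.parts.toFinset⟩

@[simp] lemma bwd_parts {m n t : ℕ} (π : t.Partition) (μ : (n - m * t).Partition)
    (h : m * t ≤ n) : (bwd m n t π μ h).1.parts = μ.parts + m • π.parts := rfl

@[simp] lemma bwd_snd {m n t : ℕ} (π : t.Partition) (μ : (n - m * t).Partition)
    (h : m * t ≤ n) : (bwd m n t π μ h).2 = π.parts.toFinset := rfl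

lemma B_ext {m n : ℕ} {a b : Σ t : ℕ, t.Partition × (n - m * t).Partition}
    (h1 : a.2.1.parts = b.2.1.parts) (h2 : a.2.2.parts = b.2.2.parts) : a = b := by
  obtain ⟨t, π, μ⟩ := a
  obtain ⟨t', π', μ'⟩ := b
  simp only at h1 h2
  have ht : t = t' := by rw [← π.parts_sum, ← π'.parts_sum, h1]
  subst ht
  have hπ : π = π' := Nat.Partition.ext h1
  have hμ : μ = μ' := Nat.Partition.ext h2
  rw [hπ, hμ]

lemma A_ext {n : ℕ} {a b : Σ _ : n.Partition, Finset ℕ}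
    (h1 : a.1.parts = b.1.parts) (h2 : a.2 = b.2) : a = b := by
  obtain ⟨π, T⟩ := a
  obtain ⟨π', T'⟩ := b
  simp only at h1 h2
  have h : π = π' := Nat.Partition.ext h1
  rw [h, h2]

end PartitionRepeatAux

open PartitionRepeatAux

set_option maxHeartbeats 2000000 in
/-- For all positive integers `m` and `n`, the number of partitions of `n` in which each part
appears fewer than `m` times equals `p(n) + ∑_{π ∈ D, m|π| ≤ n} (-1)^{n(π)} p(n - m|π|)`,
where the sum ranges over nonempty partitions `π` into distinct parts with `m|π| ≤ n`; such
partitions are exactly the distinct partitions of the numbers `t` with `1 ≤ t` and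
`m * t ≤ n`, i.e. `t ∈ [1, n / m]`. -/
theorem partitions_repeat_lt_eq_distinct_sum (m n : ℕ) (hm : 0 < m) (hn : 0 < n) :
    (Fintype.card {π : n.Partition // ∀ j ∈ π.parts, π.parts.count j < m} : ℤ) =
      (Fintype.card n.Partition : ℤ) +
        ∑ t ∈ Finset.Icc 1 (n / m), ∑ π ∈ Nat.Partition.distincts t,
          (-1 : ℤ) ^ (Multiset.card π.parts) *
            (Fintype.card (Nat.Partition (n - m * t)) : ℤ) := by
  classical
  -- Step 1: LHS as a double sum over partitions and subsets of bad parts.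
  have hL : (Fintype.card {π : n.Partition // ∀ j ∈ π.parts, π.parts.count j < m} : ℤ) =
      ∑ π : n.Partition, ∑ T ∈ (badset m π).powerset, (-1 : ℤ) ^ T.card := by
    rw [Fintype.card_subtype, ← Finset.sum_boole]
    refine Finset.sum_congr rfl fun π _ => ?_
    rw [Finset.sum_powerset_neg_one_pow_card]
    congr 1
    simp only [badset, Finset.filter_eq_empty_iff, Multiset.mem_toFinset, not_le, eq_iff_iff]
  -- Partitions of 0 have no parts.
  have hzero : ∀ π : Nat.Partition 0, π.parts = 0 := by
    intro π
    rw [Multiset.eq_zero_iff_forall_notMem]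
    intro a ha
    have h1 := π.parts_pos ha
    have h2 := π.parts_sum
    have h3 := Multiset.single_le_sum (fun x _ => Nat.zero_le x) a ha
    omega
  -- Step 2: RHS as a triple sum over t in range (n/m+1).
  have hR : (Fintype.card n.Partition : ℤ) +
        ∑ t ∈ Finset.Icc 1 (n / m), ∑ π ∈ Nat.Partition.distincts t,
          (-1 : ℤ) ^ (Multiset.card π.parts) *
            (Fintype.card (Nat.Partition (n - m * t)) : ℤ) =
      ∑ t ∈ Finset.range (n / m + 1), ∑ π ∈ Nat.Partition.distincts t,
          ∑ _μ : Nat.Partition (n - m * t), (-1 : ℤ) ^ (Multiset.card π.parts) := by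
    have hins : ∀ k : ℕ, Finset.range (k + 1) = insert 0 (Finset.Icc 1 k) := by
      intro k
      ext x; simp only [Finset.mem_range, Finset.mem_insert, Finset.mem_Icc]; omega
    rw [hins (n / m), Finset.sum_insert (by simp)]
    congr 1
    · -- t = 0 term
      have hd : Nat.Partition.distincts 0 = (Finset.univ : Finset (Nat.Partition 0)) := by
        apply Finset.eq_univ_of_forall
        intro π
        simp only [Nat.Partition.distincts, Finset.mem_filter, Finset.mem_univ, true_and, hzero π, Multiset.nodup_zero]
      rw [hd, Fintype.sum_unique, hzero]
      simp
    · refine Finset.sum_congr rfl fun t _ => Finset.sum_congr rfl fun π _ => ?_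
      rw [Finset.sum_const, Finset.card_univ, nsmul_eq_mul, mul_comm]
  rw [hL, hR]
  -- Step 3: the bijection.
  rw [← Finset.sum_sigma Finset.univ (fun π => (badset m π).powerset)
    (fun a => (-1 : ℤ) ^ a.2.card)]
  have hprod : (∑ t ∈ Finset.range (n / m + 1), ∑ π ∈ Nat.Partition.distincts t,
        ∑ _μ : Nat.Partition (n - m * t), (-1 : ℤ) ^ (Multiset.card π.parts)) =
      ∑ b ∈ (Finset.range (n / m + 1)).sigma
          (fun t => Nat.Partition.distincts t ×ˢ
            (Finset.univ : Finset (Nat.Partition (n - m * t)))),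
        (-1 : ℤ) ^ (Multiset.card b.2.1.parts) := by
    rw [Finset.sum_sigma]
    refine Finset.sum_congr rfl fun t _ => ?_
    rw [Finset.sum_product]
  rw [hprod]
  have hmt : ∀ b : Σ t : ℕ, t.Partition × (n - m * t).Partition,
      b ∈ (Finset.range (n / m + 1)).sigma
        (fun t => Nat.Partition.distincts t ×ˢ
          (Finset.univ : Finset (Nat.Partition (n - m * t)))) → m * b.1 ≤ n := by
    intro b hb
    have h1 := (Finset.mem_sigma.1 hb).1
    rw [Finset.mem_range, Nat.lt_succ_iff] at h1
    calc m * b.1 = b.1 * m := mul_comm _ _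
      _ ≤ n := (Nat.le_div_iff_mul_le hm).1 h1
  refine Finset.sum_bij'
    (fun a ha => fwd m n a.1 a.2 (Finset.mem_powerset.1 (Finset.mem_sigma.1 ha).2))
    (fun b hb => bwd m n b.1 b.2.1 b.2.2 (hmt b hb)) ?_ ?_ ?_ ?_ ?_
  · -- forward lands in target
    rintro ⟨π, T⟩ ha
    have hT : T ⊆ badset m π := Finset.mem_powerset.1 (Finset.mem_sigma.1 ha).2
    dsimp only
    rw [Finset.mem_sigma]
    constructor
    · rw [fwd_fst, Finset.mem_range, Nat.lt_succ_iff]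
      have h1 : m • T.val ≤ π.parts := smul_le hT
      have h2 : m * T.val.sum ≤ n := by
        have h3 : (π.parts - m • T.val).sum + (m • T.val).sum = n := by
          rw [← Multiset.sum_add, tsub_add_cancel_of_le h1, π.parts_sum]
        rw [sum_nsmul'] at h3
        omega
      exact (Nat.le_div_iff_mul_le hm).2 (by rw [mul_comm]; exact h2)
    · rw [Finset.mem_product]
      refine ⟨?_, Finset.mem_univ _⟩
      simp only [Nat.Partition.distincts, Finset.mem_filter, Finset.mem_univ, true_and]
      exact T.nodup
  · -- backward lands in source
    rintro ⟨t, π, μ⟩ hb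
    have hd := (Finset.mem_product.1 (Finset.mem_sigma.1 hb).2).1
    simp only [Nat.Partition.distincts, Finset.mem_filter, Finset.mem_univ, true_and] at hd
    dsimp only
    rw [Finset.mem_sigma]
    refine ⟨Finset.mem_univ _, ?_⟩
    rw [bwd_snd, Finset.mem_powerset]
    intro j hj
    rw [Multiset.mem_toFinset] at hj
    have hc : ((bwd m n t π μ (hmt ⟨t, (π, μ)⟩ hb)).1.parts).count j =
        μ.parts.count j + m * π.parts.count j := by
      rw [bwd_parts, Multiset.count_add, Multiset.count_nsmul]
    have hc1 : π.parts.count j = 1 := Multiset.count_eq_one_of_mem hd hj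
    simp only [badset, Finset.mem_filter, Multiset.mem_toFinset]
    constructor
    · rw [← Multiset.count_pos, hc, hc1]
      omega
    · rw [hc, hc1]
      omega
  · -- left inverse
    rintro ⟨π, T⟩ ha
    have hT : T ⊆ badset m π := Finset.mem_powerset.1 (Finset.mem_sigma.1 ha).2
    refine A_ext ?_ ?_
    · exact tsub_add_cancel_of_le (smul_le hT)
    · exact Finset.val_toFinset T
  · -- right inverse
    rintro ⟨t, π, μ⟩ hb
    have hd := (Finset.mem_product.1 (Finset.mem_sigma.1 hb).2).1
    simp only [Nat.Partition.distincts, Finset.mem_filter, Finset.mem_univ, true_and] at hd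
    have hded : (π.parts.toFinset.val : Multiset ℕ) = π.parts := Multiset.dedup_eq_self.2 hd
    refine B_ext ?_ ?_
    · exact hded
    · show (μ.parts + m • π.parts) - m • π.parts.toFinset.val = μ.parts
      rw [hded, add_tsub_cancel_right]
  · -- values agree
    rintro ⟨π, T⟩ ha
    rfl
end
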